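/- arXiv:2304.03996 — 4 statements merged into one kernel-verified Lean document; each statement's English description precedes it below -/
import Mathlib

section
/- Let m, k ∈ ℕ with m > log₂(4k/3). Suppose there exists a Borel probability measure P on ({0,1}^X)^k such that for every distribution D over labeled examples that is realizable by H, P({ (h_1,…,h_k) : L_D(h_i) ≤ 1/(2m) for some i ≤ k }) ≥ 3/4. Then the fractional clique number of G_m(H) satisfies ω*_m ≤ 4k/3 < 2^m; in particular the fractional clique dimension CD*(H) is finite. -/
open MeasureTheory
open scoped ENNReal

namespace ContradictionGraph

variable {X : Type*}

/-- A hypothesis `h : X → Bool` is consistent with the dataset `S` of size `m` if it labels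
every example in `S` correctly. -/
def Consistent (h : X → Bool) {m : ℕ} (S : Fin m → X × Bool) : Prop :=
  ∀ i, h (S i).1 = (S i).2

/-- A dataset `S` is realizable by the concept class `H` if some hypothesis in `H` is
consistent with it. -/
def Realizable (H : Set (X → Bool)) {m : ℕ} (S : Fin m → X × Bool) : Prop :=
  ∃ h ∈ H, Consistent h S

/-- Two datasets contradict each other if there is a point `x` such that one of them contains
the labeled example `(x, 0)` and the other contains `(x, 1)`. -/
def Contradicts {m : ℕ} (S S' : Fin m → X × Bool) : Prop :=
  ∃ x : X, ((∃ i, S i = (x, false)) ∧ (∃ j, S' j = (x, true))) ∨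
    ((∃ i, S i = (x, true)) ∧ (∃ j, S' j = (x, false)))

/-- The vertex set of the contradiction graph `G_m(H)`: all `H`-realizable datasets of
size `m`. -/
abbrev Vm (H : Set (X → Bool)) (m : ℕ) : Type _ :=
  {S : Fin m → X × Bool // Realizable H S}

/-- A clique in the contradiction graph `G_m(H)`: a set of vertices every two distinct members
of which contradict each other. -/
def IsClique (H : Set (X → Bool)) (m : ℕ) (C : Set (Vm H m)) : Prop :=
  ∀ S ∈ C, ∀ S' ∈ C, S ≠ S' → Contradicts S.1 S'.1

/-- An independent set in the contradiction graph `G_m(H)`: a set of vertices no two of which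
are adjacent (i.e. no two distinct members contradict each other). -/
def IsIndep (H : Set (X → Bool)) (m : ℕ) (I : Set (Vm H m)) : Prop :=
  ∀ S ∈ I, ∀ S' ∈ I, S ≠ S' → ¬ Contradicts S.1 S'.1

/-- The clique number `ω_m` of `G_m(H)`: the supremum of the sizes of cliques (in `ℕ∞`). -/
noncomputable def cliqueNum (H : Set (X → Bool)) (m : ℕ) : ℕ∞ :=
  ⨆ (C : Set (Vm H m)) (_ : IsClique H m C), C.encard

/-- The clique dimension `CD(H) = sup { m : ω_m = 2^m } ∈ ℕ ∪ {∞}`. -/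
noncomputable def cliqueDim (H : Set (X → Bool)) : ℕ∞ :=
  ⨆ (m : ℕ) (_ : cliqueNum H m = 2 ^ m), (m : ℕ∞)

/-- A fractional clique of `G_m(H)`: a nonnegative weight function on the vertices such that
the total weight of every independent set is at most `1`. -/
def IsFracClique (H : Set (X → Bool)) (m : ℕ) (δ : Vm H m → ℝ≥0∞) : Prop :=
  ∀ I : Set (Vm H m), IsIndep H m I → ∑' S : I, δ S.1 ≤ 1

/-- The fractional clique number `ω*_m` of `G_m(H)`: the supremum of the sizes
`|δ| = Σ_S δ(S)` of fractional cliques. -/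
noncomputable def fracCliqueNum (H : Set (X → Bool)) (m : ℕ) : ℝ≥0∞ :=
  ⨆ (δ : Vm H m → ℝ≥0∞) (_ : IsFracClique H m δ), ∑' S, δ S

/-- The fractional clique dimension `CD*(H) = sup { m : ω*_m = 2^m } ∈ ℕ ∪ {∞}`. -/
noncomputable def fracCliqueDim (H : Set (X → Bool)) : ℕ∞ :=
  ⨆ (m : ℕ) (_ : fracCliqueNum H m = 2 ^ m), (m : ℕ∞)

end ContradictionGraph

namespace ContradictionGraph
variable {X : Type*} [MeasurableSpace X]

/-- The population loss `L_D(h) = Pr_{(x,y) ∼ D} [h(x) ≠ y]`. -/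
noncomputable def popLoss (D : Measure (X × Bool)) (h : X → Bool) : ℝ≥0∞ :=
  D {p | h p.1 ≠ p.2}

/-- A distribution over labeled examples is realizable by `H` if `inf_{h ∈ H} L_D(h) = 0`. -/
def RealizableDist (H : Set (X → Bool)) (D : Measure (X × Bool)) : Prop :=
  (⨅ h ∈ H, popLoss D h) = 0

/-- `A` is an `(m, α, β)`-learner for `H`: for every realizable distribution `D`, the
probability over `S ∼ D^m` and `h ∼ A(S)` that `L_D(h) > α` is less than `β`. -/
def IsLearner (H : Set (X → Bool)) (m : ℕ) (A : (Fin m → X × Bool) → Measure (X → Bool))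
    (α β : ℝ) : Prop :=
  ∀ D : Measure (X × Bool), IsProbabilityMeasure D → RealizableDist H D →
    (∫⁻ S, A S {h | ENNReal.ofReal α < popLoss D h} ∂(Measure.pi fun _ : Fin m => D))
      < ENNReal.ofReal β

/-- Two datasets of size `m` are neighboring if they differ in at most a single example. -/
def Neighboring {m : ℕ} (S S' : Fin m → X × Bool) : Prop :=
  ∃ i : Fin m, ∀ j, j ≠ i → S j = S' j

/-- `A` is `(ε, δ)`-differentially private: for all neighboring input datasets and every
(Borel) event `E`, `Pr[A(S) ∈ E] ≤ e^ε · Pr[A(S') ∈ E] + δ`. -/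
def IsDP {m : ℕ} (A : (Fin m → X × Bool) → Measure (X → Bool)) (ε δ : ℝ) : Prop :=
  ∀ S S' : Fin m → X × Bool, Neighboring S S' → ∀ E : Set (X → Bool), MeasurableSet E →
    A S E ≤ ENNReal.ofReal (Real.exp ε) * A S' E + ENNReal.ofReal δ

/-- `H` is approximately differentially privately PAC learnable. -/
def ApproxDPLearnable (H : Set (X → Bool)) : Prop :=
  ∃ ε₀ : ℝ, 0 < ε₀ ∧ ∃ α β δ : ℕ → ℝ,
    Filter.Tendsto α Filter.atTop (nhds 0) ∧
    Filter.Tendsto β Filter.atTop (nhds 0) ∧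
    (∀ m, 0 ≤ δ m) ∧
    (∀ c : ℝ, 0 < c → Filter.Tendsto (fun m : ℕ => (m : ℝ) ^ c * δ m) Filter.atTop (nhds 0)) ∧
    ∃ A : (m : ℕ) → (Fin m → X × Bool) → Measure (X → Bool),
      (∀ m S, IsProbabilityMeasure (A m S)) ∧
      (∀ m, IsDP (A m) ε₀ (δ m)) ∧
      (∀ m, IsLearner H m (A m) (α m) (β m))

/-- `H` is pure differentially privately PAC learnable. -/
def PureDPLearnable (H : Set (X → Bool)) : Prop :=
  ∃ ε₀ : ℝ, 0 < ε₀ ∧ ∃ α β : ℕ → ℝ,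
    Filter.Tendsto α Filter.atTop (nhds 0) ∧
    Filter.Tendsto β Filter.atTop (nhds 0) ∧
    ∃ A : (m : ℕ) → (Fin m → X × Bool) → Measure (X → Bool),
      (∀ m S, IsProbabilityMeasure (A m S)) ∧
      (∀ m, IsDP (A m) ε₀ 0) ∧
      (∀ m, IsLearner H m (A m) (α m) (β m))

end ContradictionGraph

namespace CoinAux

instance : TopologicalSpace (ZMod 4) := ⊥
instance : DiscreteTopology (ZMod 4) := ⟨rfl⟩
instance : MeasurableSpace (ZMod 4) := ⊤
instance : BorelSpace (ZMod 4) := ⟨borel_eq_top_of_discrete.symm⟩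
instance : MeasurableSingletonClass (ZMod 4) := ⟨fun _ => trivial⟩
instance : IsTopologicalAddGroup (ZMod 4) :=
  { continuous_add := continuous_of_discreteTopology,
    continuous_neg := continuous_of_discreteTopology }

variable (Y : Type*) [Countable Y]

noncomputable def coinM : Measure (Y → ZMod 4) :=
  Measure.addHaarMeasure ⟨⟨Set.univ, isCompact_univ⟩, by simp⟩

instance : IsProbabilityMeasure (coinM Y) := by
  constructor
  have := Measure.addHaarMeasure_self (G := Y → ZMod 4)
      (K₀ := ⟨⟨Set.univ, isCompact_univ⟩, by simp⟩)
  simpa [coinM] using this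

variable {Y}

def cylSet (F : Finset Y) (w : Y → ZMod 4) : Set (Y → ZMod 4) := {ε | ∀ x ∈ F, ε x = w x}

set_option linter.unusedSectionVars false in
lemma measurableSet_cylSet (F : Finset Y) (w : Y → ZMod 4) : MeasurableSet (cylSet F w) := by
  have : cylSet F w = ⋂ x ∈ F, (fun ε : Y → ZMod 4 => ε x) ⁻¹' {w x} := by
    ext ε; simp [cylSet]
  rw [this]
  exact MeasurableSet.biInter F.countable_toSet
    (fun x _ => measurable_pi_apply x (measurableSet_singleton _))

lemma coinM_cylSet (F : Finset Y) (w : Y → ZMod 4) :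
    coinM Y (cylSet F w) = 4⁻¹ ^ F.card := by
  classical
  have key : ∀ v : Y → ZMod 4, coinM Y (cylSet F v) = coinM Y (cylSet F w) := by
    intro v
    have hinv : (coinM Y).IsAddLeftInvariant := by
      unfold coinM; infer_instance
    have : cylSet F v = (fun ε : Y → ZMod 4 => (fun x => w x - v x) + ε) ⁻¹' cylSet F w := by
      ext ε
      simp only [cylSet, Set.mem_setOf_eq, Set.mem_preimage, Pi.add_apply]
      constructor
      · intro h x hx; rw [h x hx]; exact sub_add_cancel (w x) (v x)
      · intro h x hx
        have h2 := h x hx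
        have h3 : w x - v x + v x = w x := sub_add_cancel (w x) (v x)
        exact add_left_cancel (h2.trans h3.symm)
    rw [this, measure_preimage_add]
  have hpart : (Set.univ : Set (Y → ZMod 4)) =
      ⋃ g : {x // x ∈ F} → ZMod 4,
        cylSet F (fun x => if h : x ∈ F then g ⟨x, h⟩ else 0) := by
    ext ε
    simp only [Set.mem_univ, true_iff, Set.mem_iUnion]
    exact ⟨fun x => ε x.1, fun x hx => by simp [hx]⟩
  have hdisj : Pairwise (Function.onFun Disjoint
      (fun g : {x // x ∈ F} → ZMod 4 =>
        cylSet F (fun x => if h : x ∈ F then g ⟨x, h⟩ else 0))) := by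
    intro g g' hgg'
    rw [Function.onFun, Set.disjoint_left]
    intro ε hε hε'
    apply hgg'
    funext x
    have h1 := hε x.1 x.2
    have h2 := hε' x.1 x.2
    simp only [x.2, dif_pos] at h1 h2
    rw [← h1, ← h2]
  have h1 : (1 : ℝ≥0∞) = ∑' g : {x // x ∈ F} → ZMod 4,
      coinM Y (cylSet F (fun x => if h : x ∈ F then g ⟨x, h⟩ else 0)) := by
    rw [← measure_iUnion hdisj (fun g => measurableSet_cylSet _ _), ← hpart]
    exact (measure_univ).symm
  rw [tsum_congr (fun g => key _), tsum_fintype, Finset.sum_const, Finset.card_univ] at h1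
  have hcard : Fintype.card ({x // x ∈ F} → ZMod 4) = 4 ^ F.card := by
    rw [Fintype.card_fun, Fintype.card_coe]; rfl
  rw [hcard] at h1
  have h4' : ((4 : ℝ≥0∞) ^ F.card) ≠ 0 := by positivity
  have h4'' : ((4 : ℝ≥0∞) ^ F.card) ≠ ⊤ := by
    exact ENNReal.pow_ne_top (by norm_num)
  rw [nsmul_eq_mul] at h1
  push_cast at h1
  have : coinM Y (cylSet F w) = 1 / (4:ℝ≥0∞) ^ F.card := by
    rw [ENNReal.eq_div_iff h4' h4'']
    · exact h1.symm
  rw [this, one_div, ENNReal.inv_pow]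

lemma count_aux [DecidableEq Y] (F T : Finset Y) (hT : T ⊆ F) :
    (Finset.univ.filter
      (fun g : {x // x ∈ F} → ZMod 4 => ∀ x : {x // x ∈ F}, (g x = 0 ↔ x.1 ∈ T))).card
      = 3 ^ (F.card - T.card) := by
  classical
  rw [← Fintype.card_subtype]
  have e : {g : {x // x ∈ F} → ZMod 4 // ∀ x : {x // x ∈ F}, (g x = 0 ↔ x.1 ∈ T)} ≃
      ∀ x : {x // x ∈ F}, {a : ZMod 4 // a = 0 ↔ x.1 ∈ T} :=
    Equiv.subtypePiEquivPi (p := fun (x : {x // x ∈ F}) (a : ZMod 4) => a = 0 ↔ x.1 ∈ T)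
  rw [Fintype.card_congr e, Fintype.card_pi]
  have hfac : ∀ x : {x // x ∈ F}, Fintype.card {a : ZMod 4 // a = 0 ↔ x.1 ∈ T}
      = if x.1 ∈ T then 1 else 3 := by
    intro x
    by_cases hx : x.1 ∈ T
    · rw [if_pos hx]
      have : ∀ a : ZMod 4, (a = 0 ↔ x.1 ∈ T) ↔ a = 0 := by
        intro a; simp [hx]
      rw [Fintype.card_congr (Equiv.subtypeEquivRight this)]
      exact Fintype.card_subtype_eq 0
    · rw [if_neg hx]
      have : ∀ a : ZMod 4, (a = 0 ↔ x.1 ∈ T) ↔ ¬ (a = 0) := by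
        intro a; simp [hx]
      rw [Fintype.card_congr (Equiv.subtypeEquivRight this)]
      rw [Fintype.card_subtype_compl]
      rw [Fintype.card_subtype_eq 0]
      rfl
  rw [Finset.prod_congr rfl (fun x _ => hfac x)]
  have : ∏ x : {x // x ∈ F}, (if x.1 ∈ T then 1 else 3)
      = ∏ x ∈ F, (if x ∈ T then 1 else 3) := by
    rw [← Finset.prod_attach F (fun x => if x ∈ T then 1 else 3)]
    rfl
  rw [this, Finset.prod_ite, Finset.prod_const, Finset.prod_const, one_pow, one_mul]
  congr 1
  rw [← Finset.card_sdiff_of_subset hT]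
  congr 1
  ext x
  simp [Finset.mem_sdiff, Finset.mem_filter]

/-- The biased-flip event: on `F`, `ε x = 0` exactly on `T`. -/
lemma coinM_flipSet (F T : Finset Y) (hT : T ⊆ F) :
    coinM Y {ε : Y → ZMod 4 | ∀ x ∈ F, (ε x = 0 ↔ x ∈ T)}
      = (3:ℝ≥0∞) ^ (F.card - T.card) * 4⁻¹ ^ F.card := by
  classical
  set pred := fun g : {x // x ∈ F} → ZMod 4 => ∀ x : {x // x ∈ F}, (g x = 0 ↔ x.1 ∈ T)
    with hpred
  have hE : {ε : Y → ZMod 4 | ∀ x ∈ F, (ε x = 0 ↔ x ∈ T)} =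
      ⋃ g ∈ Finset.univ.filter pred,
        cylSet F (fun x => if h : x ∈ F then g ⟨x, h⟩ else 0) := by
    ext ε
    simp only [Set.mem_setOf_eq, Set.mem_iUnion, Finset.mem_filter, Finset.mem_univ, true_and]
    constructor
    · intro h
      refine ⟨fun x => ε x.1, fun x => h x.1 x.2, fun x hx => by simp [hx]⟩
    · rintro ⟨g, hg, hcyl⟩ x hx
      have := hcyl x hx
      simp only [hx, dif_pos] at this
      rw [this]
      exact hg ⟨x, hx⟩
  rw [hE]
  rw [measure_biUnion_finset ?_ (fun g _ => measurableSet_cylSet _ _)]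
  · rw [Finset.sum_congr rfl (fun g _ => coinM_cylSet F _), Finset.sum_const, count_aux F T hT]
    rw [nsmul_eq_mul]
    push_cast
    ring
  · intro g hg g' hg' hgg'
    rw [Function.onFun, Set.disjoint_left]
    intro ε hε hε'
    apply hgg'
    funext x
    have h1 := hε x.1 x.2
    have h2 := hε' x.1 x.2
    simp only [x.2, dif_pos] at h1 h2
    rw [← h1, ← h2]

end CoinAux

namespace ContradictionGraph

variable {X : Type*} [Countable X] [MeasurableSpace X] [MeasurableSingletonClass X]

lemma measurableSet_XB (s : Set (X × Bool)) : MeasurableSet s :=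
  (Set.to_countable s).measurableSet

/-- Uniform distribution over the examples of a dataset. -/
noncomputable def unifOn {n : ℕ} (S : Fin n → X × Bool) : Measure (X × Bool) :=
  (n : ℝ≥0∞)⁻¹ • ∑ j, Measure.dirac (S j)

/-- number of erroneous examples -/
noncomputable def errCount (h : X → Bool) {n : ℕ} (S : Fin n → X × Bool) : ℕ :=
  (Finset.univ.filter (fun j => h (S j).1 ≠ (S j).2)).card

lemma unifOn_apply {n : ℕ} (S : Fin n → X × Bool) (s : Set (X × Bool)) :
    unifOn S s = (n : ℝ≥0∞)⁻¹ * ∑ j, s.indicator (fun _ => (1:ℝ≥0∞)) (S j) := by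
  classical
  rw [unifOn, Measure.smul_apply, Measure.finset_sum_apply, smul_eq_mul]
  congr 1
  refine Finset.sum_congr rfl (fun j _ => ?_)
  rw [Measure.dirac_apply' _ (measurableSet_XB s)]
  rfl

lemma popLoss_unifOn {n : ℕ} (S : Fin n → X × Bool) (h : X → Bool) :
    popLoss (unifOn S) h = (n : ℝ≥0∞)⁻¹ * (errCount h S : ℝ≥0∞) := by
  classical
  rw [popLoss, unifOn_apply]
  congr 1
  rw [errCount]
  rw [← Finset.sum_boole]
  refine Finset.sum_congr rfl (fun j _ => ?_)
  by_cases hj : h (S j).1 = (S j).2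
  · rw [Set.indicator_of_notMem (by simpa using hj), if_neg (by simpa using hj)]
  · rw [Set.indicator_of_mem (by simpa using hj), if_pos (by simpa using hj)]

lemma isProb_unifOn {n : ℕ} (hn : n ≠ 0) (S : Fin n → X × Bool) :
    IsProbabilityMeasure (unifOn S) := by
  constructor
  rw [unifOn_apply]
  simp only [Set.indicator_univ]
  rw [Finset.sum_const, Finset.card_univ, Fintype.card_fin, nsmul_eq_mul, mul_one]
  exact ENNReal.inv_mul_cancel (by exact_mod_cast hn) (by simp)

lemma realizableDist_unifOn {H : Set (X → Bool)} {n : ℕ} {S : Fin n → X × Bool}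
    (hS : Realizable H S) : RealizableDist H (unifOn S) := by
  obtain ⟨h, hH, hc⟩ := hS
  refine le_antisymm ?_ zero_le
  refine le_trans (iInf₂_le h hH) ?_
  rw [popLoss_unifOn]
  have : errCount h S = 0 := by
    rw [errCount, Finset.card_eq_zero, Finset.filter_eq_empty_iff]
    intro j _
    simpa using hc j
  simp [this]

lemma errCount_le_w0 {n m : ℕ} (hn : n ≠ 0) (hm : m ≠ 0) (S : Fin n → X × Bool)
    (h : X → Bool)
    (hle : popLoss (unifOn S) h ≤ ENNReal.ofReal (1 / (2 * (m : ℝ)))) :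
    errCount h S ≤ n / (2 * m) := by
  rw [popLoss_unifOn] at hle
  have hofr : ENNReal.ofReal (1 / (2 * (m : ℝ))) = ((2 * m : ℕ) : ℝ≥0∞)⁻¹ := by
    rw [one_div, ENNReal.ofReal_inv_of_pos (by positivity)]
    congr 1
    rw [show (2 * (m:ℝ)) = ((2 * m : ℕ) : ℝ) by push_cast; ring, ENNReal.ofReal_natCast]
  rw [hofr] at hle
  have hne : ((n:ℝ≥0∞)) ≠ 0 := by exact_mod_cast hn
  have hnt : ((n:ℝ≥0∞)) ≠ ⊤ := by simp
  have h1 : (errCount h S : ℝ≥0∞) ≤ (n : ℝ≥0∞) * ((2 * m : ℕ) : ℝ≥0∞)⁻¹ := by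
    calc (errCount h S : ℝ≥0∞) = (n : ℝ≥0∞) * ((n : ℝ≥0∞)⁻¹ * (errCount h S : ℝ≥0∞)) := by
          rw [← mul_assoc, ENNReal.mul_inv_cancel hne hnt, one_mul]
    _ ≤ (n : ℝ≥0∞) * ((2 * m : ℕ) : ℝ≥0∞)⁻¹ := mul_le_mul_right hle _
  rw [← div_eq_mul_inv] at h1
  have h2 : (errCount h S : ℝ≥0∞) * ((2*m : ℕ) : ℝ≥0∞) ≤ (n : ℝ≥0∞) :=
    (ENNReal.le_div_iff_mul_le (Or.inl (by exact_mod_cast Nat.mul_ne_zero two_ne_zero hm))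
      (Or.inl (by exact_mod_cast (ENNReal.natCast_ne_top (2*m))))).mp h1
  have h3 : errCount h S * (2 * m) ≤ n := by exact_mod_cast h2
  exact (Nat.le_div_iff_mul_le (by omega)).mpr h3

set_option linter.unusedSectionVars false in
/-- Master covering bound. -/
lemma master_cover {H : Set (X → Bool)} {n : ℕ} (δ : Vm H n → ℝ≥0∞)
    (hδ : IsFracClique H n δ) {Ω : Type*} [MeasurableSpace Ω] (μ : Measure Ω)
    [IsProbabilityMeasure μ] (G : Ω → X → Bool)
    (hG : ∀ S : Vm H n, MeasurableSet {ω | Consistent (G ω) S.1}) :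
    ∑' S : Vm H n, δ S * μ {ω | Consistent (G ω) S.1} ≤ 1 := by
  have step1 : ∑' S : Vm H n, δ S * μ {ω | Consistent (G ω) S.1}
      = ∫⁻ ω, (∑' S : Vm H n, ({ω | Consistent (G ω) S.1}).indicator (fun _ => δ S) ω) ∂μ := by
    rw [lintegral_tsum (fun S => (measurable_const.indicator (hG S)).aemeasurable)]
    refine tsum_congr (fun S => ?_)
    rw [lintegral_indicator_const (hG S)]
  rw [step1]
  calc ∫⁻ ω, (∑' S : Vm H n, ({ω | Consistent (G ω) S.1}).indicator (fun _ => δ S) ω) ∂μ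
      ≤ ∫⁻ _, (1:ℝ≥0∞) ∂μ := by
        refine lintegral_mono (fun ω => ?_)
        set I : Set (Vm H n) := {S | Consistent (G ω) S.1} with hI
        have keq : ∀ S : Vm H n,
            ({ω | Consistent (G ω) S.1}).indicator (fun _ => δ S) ω = I.indicator δ S := by
          intro S
          by_cases hS : Consistent (G ω) S.1
          · rw [Set.indicator_of_mem (show ω ∈ {ω | Consistent (G ω) S.1} from hS),
              Set.indicator_of_mem (show S ∈ I from hS)]
          · rw [Set.indicator_of_notMem (show ω ∉ {ω | Consistent (G ω) S.1} from hS),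
              Set.indicator_of_notMem (show S ∉ I from hS)]
        rw [tsum_congr keq, ← tsum_subtype I δ]
        refine hδ I (fun S hS S' hS' hne hcon => ?_)
        obtain ⟨x, hca⟩ := hcon
        rcases hca with ⟨⟨i, hi⟩, ⟨j, hj⟩⟩ | ⟨⟨i, hi⟩, ⟨j, hj⟩⟩
        · have h1 := hS i; have h2 := hS' j
          rw [hi] at h1; rw [hj] at h2
          simp only at h1 h2
          rw [h1] at h2; simp at h2
        · have h1 := hS i; have h2 := hS' j
          rw [hi] at h1; rw [hj] at h2
          simp only at h1 h2
          rw [h1] at h2; simp at h2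
  _ = 1 := by simp

end ContradictionGraph

namespace ContradictionGraph

variable {X : Type*} [Countable X] [MeasurableSpace X] [MeasurableSingletonClass X]

set_option linter.unusedSectionVars false in
lemma measurableSet_consistent {H : Set (X → Bool)} {k n : ℕ} (i : Fin k) (S : Vm H n) :
    MeasurableSet {hs : Fin k → X → Bool | Consistent (hs i) S.1} := by
  have : {hs : Fin k → X → Bool | Consistent (hs i) S.1}
      = ⋂ j, (fun hs : Fin k → X → Bool => hs i (S.1 j).1) ⁻¹' {(S.1 j).2} := by
    ext hs; simp [Consistent, Set.mem_iInter]
  rw [this]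
  exact MeasurableSet.iInter fun j =>
    ((measurable_pi_apply _).comp (measurable_pi_apply i)) (measurableSet_singleton _)

lemma part1_bound {H : Set (X → Bool)} {m k : ℕ} (hm : m ≠ 0)
    (P : Measure (Fin k → X → Bool)) [IsProbabilityMeasure P]
    (hgood : ∀ D : Measure (X × Bool), IsProbabilityMeasure D → RealizableDist H D →
      (3 / 4 : ℝ≥0∞) ≤ P {hs | ∃ i : Fin k, popLoss D (hs i) ≤ ENNReal.ofReal (1 / (2 * (m:ℝ)))})
    (δ : Vm H m → ℝ≥0∞) (hδ : IsFracClique H m δ) :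
    (3/4 : ℝ≥0∞) * ∑' S, δ S ≤ k := by
  classical
  have hcover : ∀ S : Vm H m,
      (3/4:ℝ≥0∞) ≤ ∑ i, P {hs : Fin k → X → Bool | Consistent (hs i) S.1} := by
    intro S
    haveI := isProb_unifOn (X := X) hm S.1
    have h34 := hgood (unifOn S.1) inferInstance (realizableDist_unifOn S.2)
    have hsub : {hs : Fin k → X → Bool |
          ∃ i, popLoss (unifOn S.1) (hs i) ≤ ENNReal.ofReal (1/(2*(m:ℝ)))}
        ⊆ ⋃ i : Fin k, {hs : Fin k → X → Bool | Consistent (hs i) S.1} := ?_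
    · refine le_trans h34 (le_trans (measure_mono hsub) (le_trans (measure_iUnion_le _) ?_))
      rw [tsum_fintype]
    rintro hs ⟨i, hi⟩
    have hc := errCount_le_w0 hm hm S.1 (hs i) hi
    have hz : m / (2*m) = 0 := Nat.div_eq_of_lt (by omega)
    have hc0 : errCount (hs i) S.1 = 0 := by omega
    have hcons : Consistent (hs i) S.1 := by
      intro j
      by_contra hj
      have hmem : j ∈ Finset.univ.filter (fun j => hs i (S.1 j).1 ≠ (S.1 j).2) := by
        simp [hj]
      have := Finset.card_pos.mpr ⟨j, hmem⟩
      rw [errCount] at hc0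
      omega
    exact Set.mem_iUnion.mpr ⟨i, hcons⟩
  have main : ∀ i : Fin k, ∑' S : Vm H m, δ S * P {hs | Consistent (hs i) S.1} ≤ 1 :=
    fun i => master_cover δ hδ P (fun hs => hs i) (fun S => measurableSet_consistent i S)
  calc (3/4:ℝ≥0∞) * ∑' S, δ S = ∑' S : Vm H m, δ S * (3/4) := by
        rw [ENNReal.tsum_mul_right, mul_comm]
    _ ≤ ∑' S : Vm H m, δ S * ∑ i, P {hs | Consistent (hs i) S.1} :=
        ENNReal.tsum_le_tsum (fun S => mul_le_mul_right (hcover S) _)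
    _ = ∑' S : Vm H m, ∑ i, δ S * P {hs | Consistent (hs i) S.1} := by
        exact tsum_congr (fun S => Finset.mul_sum _ _ _)
    _ = ∑ i, ∑' S : Vm H m, δ S * P {hs | Consistent (hs i) S.1} := by
        exact Summable.tsum_finsetSum (fun i _ => ENNReal.summable)
    _ ≤ ∑ _i : Fin k, 1 := Finset.sum_le_sum (fun i _ => main i)
    _ = k := by simp

end ContradictionGraph

namespace ContradictionGraph

open CoinAux

variable {X : Type*} [Countable X] [MeasurableSpace X] [MeasurableSingletonClass X]

set_option linter.unusedSectionVars false in
set_option maxHeartbeats 1000000 in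
lemma part3_bound {H : Set (X → Bool)} {m k n : ℕ} (hm : m ≠ 0) (hn : n ≠ 0)
    (P : Measure (Fin k → X → Bool)) [IsProbabilityMeasure P]
    (hgood : ∀ D : Measure (X × Bool), IsProbabilityMeasure D → RealizableDist H D →
      (3 / 4 : ℝ≥0∞) ≤ P {hs | ∃ i : Fin k, popLoss D (hs i) ≤ ENNReal.ofReal (1 / (2 * (m:ℝ)))})
    (δ : Vm H n → ℝ≥0∞) (hδ : IsFracClique H n δ) :
    (3/4 : ℝ≥0∞)^(n+1) * ((3:ℝ≥0∞))⁻¹^(n/(2*m)) * ∑' S, δ S ≤ k := by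
  classical
  set w₀ := n / (2*m) with hw₀
  set Ω := (Fin k → X → Bool) × (X → ZMod 4) with hΩ
  set μ : Measure Ω := P.prod (coinM X) with hμ
  haveI : IsProbabilityMeasure μ := by rw [hμ]; infer_instance
  set G : Fin k → Ω → X → Bool :=
    fun i ω x => xor (ω.1 i x) (decide (ω.2 x = 0)) with hGdef
  have hGmeas : ∀ (i : Fin k) (S : Vm H n), MeasurableSet {ω : Ω | Consistent (G i ω) S.1} := by
    intro i S
    have hset : {ω : Ω | Consistent (G i ω) S.1}
        = ⋂ j, (fun ω : Ω => (ω.1 i (S.1 j).1, ω.2 (S.1 j).1))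
            ⁻¹' {p : Bool × ZMod 4 | xor p.1 (decide (p.2 = 0)) = (S.1 j).2} := by
      ext ω; simp [Consistent, Set.mem_iInter, hGdef]
    rw [hset]
    refine MeasurableSet.iInter fun j => ?_
    have hmap : Measurable (fun ω : Ω => (ω.1 i (S.1 j).1, ω.2 (S.1 j).1)) :=
      ((measurable_pi_apply _).comp ((measurable_pi_apply i).comp measurable_fst)).prodMk
        ((measurable_pi_apply _).comp measurable_snd)
    exact hmap ((Set.to_countable _).measurableSet)
  have key : ∀ S : Vm H n,
      (3/4:ℝ≥0∞)^(n+1) * (3:ℝ≥0∞)⁻¹^w₀ ≤ ∑ i, μ {ω : Ω | Consistent (G i ω) S.1} := by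
    intro S
    obtain ⟨hstar, hstarH, hstarC⟩ := S.2
    set pts : Finset X := Finset.image (fun j => (S.1 j).1) Finset.univ with hpts
    have hptscard : pts.card ≤ n := le_trans Finset.card_image_le (by simp)
    haveI := isProb_unifOn (X := X) hn S.1
    have h34 := hgood (unifOn S.1) inferInstance (realizableDist_unifOn S.2)
    set c₀ : ℝ≥0∞ := (3/4:ℝ≥0∞)^n * (3:ℝ≥0∞)⁻¹^w₀ with hc₀
    set Ei : Fin k → Set (Fin k → X → Bool) :=
      fun i => {hs | popLoss (unifOn S.1) (hs i) ≤ ENNReal.ofReal (1 / (2 * (m:ℝ)))} with hEidef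
    have hEimeas : ∀ i, MeasurableSet (Ei i) := by
      intro i
      have hfun : (fun hs : Fin k → X → Bool => popLoss (unifOn S.1) (hs i))
          = fun hs => (n:ℝ≥0∞)⁻¹ *
              ∑ j, (if hs i (S.1 j).1 ≠ (S.1 j).2 then (1:ℝ≥0∞) else 0) := by
        funext hs
        rw [popLoss_unifOn, errCount]
        congr 1
        rw [Finset.sum_boole]
      have hmble : Measurable (fun hs : Fin k → X → Bool => popLoss (unifOn S.1) (hs i)) := by
        rw [hfun]
        refine Measurable.const_mul ?_ _
        refine Finset.measurable_sum _ (fun j _ => ?_)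
        refine Measurable.ite ?_ measurable_const measurable_const
        exact (((measurable_pi_apply _).comp (measurable_pi_apply i))
          (measurableSet_singleton _)).compl
      exact hmble measurableSet_Iic
    set Tof : Fin k → (Fin k → X → Bool) → Finset X :=
      fun i hs => pts.filter (fun x => hs i x ≠ hstar x) with hTofdef
    have hTofmeas : ∀ (i : Fin k) (T : Finset X), T ⊆ pts →
        MeasurableSet {hs : Fin k → X → Bool | Tof i hs = T} := by
      intro i T hTsub
      have hset : {hs : Fin k → X → Bool | Tof i hs = T} =
          ⋂ x ∈ pts, {hs : Fin k → X → Bool | (hs i x ≠ hstar x) ↔ x ∈ T} := by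
        ext hs
        simp only [Set.mem_setOf_eq, Set.mem_iInter]
        constructor
        · intro he x hx
          constructor
          · intro hne; rw [← he]; exact Finset.mem_filter.mpr ⟨hx, hne⟩
          · intro hmem; rw [← he] at hmem; exact (Finset.mem_filter.mp hmem).2
        · intro hiff
          ext x
          rw [Finset.mem_filter]
          constructor
          · rintro ⟨hx, hne⟩; exact (hiff x hx).mp hne
          · intro hxT
            have hx := hTsub hxT
            exact ⟨hx, (hiff x hx).mpr hxT⟩
      rw [hset]
      refine MeasurableSet.biInter pts.countable_toSet fun x _ => ?_
      by_cases hxT : x ∈ T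
      · have : {hs : Fin k → X → Bool | (hs i x ≠ hstar x) ↔ x ∈ T}
            = ((fun hs : Fin k → X → Bool => hs i x) ⁻¹' {hstar x})ᶜ := by
          ext hs; simp [hxT]
        rw [this]
        exact (((measurable_pi_apply x).comp (measurable_pi_apply i))
          (measurableSet_singleton _)).compl
      · have : {hs : Fin k → X → Bool | (hs i x ≠ hstar x) ↔ x ∈ T}
            = (fun hs : Fin k → X → Bool => hs i x) ⁻¹' {hstar x} := by
          ext hs; simp [hxT]
        rw [this]
        exact ((measurable_pi_apply x).comp (measurable_pi_apply i))
          (measurableSet_singleton _)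
    have hTcard : ∀ (i : Fin k) (hs : Fin k → X → Bool), hs ∈ Ei i → (Tof i hs).card ≤ w₀ := by
      intro i hs hhs
      have hsub : Tof i hs ⊆
          (Finset.univ.filter (fun j => hs i (S.1 j).1 ≠ (S.1 j).2)).image
            (fun j => (S.1 j).1) := by
        intro x hx
        obtain ⟨hxpts, hneq⟩ := Finset.mem_filter.mp hx
        obtain ⟨j, _, hj⟩ := Finset.mem_image.mp hxpts
        refine Finset.mem_image.mpr ⟨j, ?_, hj⟩
        rw [Finset.mem_filter]
        refine ⟨Finset.mem_univ j, ?_⟩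
        have hlab : (S.1 j).2 = hstar (S.1 j).1 := (hstarC j).symm
        rw [hlab, hj]
        exact hneq
      refine le_trans (Finset.card_le_card hsub) (le_trans Finset.card_image_le ?_)
      exact errCount_le_w0 hn hm S.1 (hs i) hhs
    set Fix : Finset X → Set (X → ZMod 4) :=
      fun T => {ε : X → ZMod 4 | ∀ x ∈ pts, (ε x = 0 ↔ x ∈ T)} with hFixdef
    have hFixmeas : ∀ T, MeasurableSet (Fix T) := by
      intro T
      have hset : Fix T = ⋂ x ∈ pts, (fun ε : X → ZMod 4 => ε x) ⁻¹'
          {a : ZMod 4 | a = 0 ↔ x ∈ T} := by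
        ext ε; simp [hFixdef]
      rw [hset]
      exact MeasurableSet.biInter pts.countable_toSet fun x _ =>
        (measurable_pi_apply x) ((Set.to_countable _).measurableSet)
    have hFixlb : ∀ T, T ⊆ pts → T.card ≤ w₀ → c₀ ≤ coinM X (Fix T) := by
      intro T hTsub hTc
      rw [hFixdef]
      rw [coinM_flipSet pts T hTsub]
      have h3 : (3:ℝ≥0∞) * 3⁻¹ = 1 := ENNReal.mul_inv_cancel (by norm_num) (by norm_num)
      have heq : (3:ℝ≥0∞) ^ (pts.card - T.card) * 4⁻¹ ^ pts.card
          = (3/4:ℝ≥0∞)^pts.card * (3:ℝ≥0∞)⁻¹^T.card := by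
        have h1 : (3:ℝ≥0∞)^pts.card = 3^(pts.card - T.card) * 3^T.card := by
          rw [← pow_add]
          congr 1
          exact (Nat.sub_add_cancel (Finset.card_le_card hTsub)).symm
        have h2 : (3/4:ℝ≥0∞)^pts.card = 3^pts.card * 4⁻¹^pts.card := by
          rw [div_eq_mul_inv, mul_pow]
        rw [h2, h1]
        have h4 : (3:ℝ≥0∞)^T.card * (3:ℝ≥0∞)⁻¹^T.card = 1 := by
          rw [← mul_pow, h3, one_pow]
        calc (3:ℝ≥0∞) ^ (pts.card - T.card) * 4⁻¹ ^ pts.card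
            = 3 ^ (pts.card - T.card) * (3^T.card * 3⁻¹^T.card) * 4⁻¹ ^ pts.card := by
              rw [h4, mul_one]
          _ = 3 ^ (pts.card - T.card) * 3^T.card * 4⁻¹ ^ pts.card * 3⁻¹^T.card := by ring
      rw [heq, hc₀]
      refine mul_le_mul' ?_ ?_
      · exact pow_le_pow_of_le_one zero_le (by
          rw [ENNReal.div_le_iff (by norm_num) (by norm_num)]; norm_num) hptscard
      · exact pow_le_pow_of_le_one zero_le (by norm_num) hTc
    have hincl : ∀ (i : Fin k) (T : Finset X), T ⊆ pts →
        ((Ei i ∩ {hs | Tof i hs = T}) ×ˢ Fix T) ⊆ {ω : Ω | Consistent (G i ω) S.1} := by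
      intro i T _ ω hω
      obtain ⟨⟨_, hTeq⟩, hfix⟩ := hω
      intro j
      have hxpts : (S.1 j).1 ∈ pts := Finset.mem_image.mpr ⟨j, Finset.mem_univ j, rfl⟩
      have hlab : (S.1 j).2 = hstar (S.1 j).1 := (hstarC j).symm
      have hiff := hfix (S.1 j).1 hxpts
      show xor (ω.1 i (S.1 j).1) (decide (ω.2 (S.1 j).1 = 0)) = (S.1 j).2
      rw [hlab]
      by_cases hxT : (S.1 j).1 ∈ T
      · have h0 : ω.2 (S.1 j).1 = 0 := hiff.mpr hxT
        have hne : ω.1 i (S.1 j).1 ≠ hstar (S.1 j).1 := by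
          have hmem : (S.1 j).1 ∈ Tof i ω.1 := by rw [hTeq]; exact hxT
          exact (Finset.mem_filter.mp hmem).2
        rw [h0]
        cases h1 : ω.1 i (S.1 j).1 <;> cases h2 : hstar (S.1 j).1 <;> simp_all
      · have h0 : ω.2 (S.1 j).1 ≠ 0 := fun hc => hxT (hiff.mp hc)
        have heq : ω.1 i (S.1 j).1 = hstar (S.1 j).1 := by
          by_contra hne
          have hmem : (S.1 j).1 ∈ Tof i ω.1 := Finset.mem_filter.mpr ⟨hxpts, hne⟩
          rw [hTeq] at hmem
          exact hxT hmem
        simp [h0, heq]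
    have hper : ∀ i : Fin k, c₀ * P (Ei i) ≤ μ {ω : Ω | Consistent (G i ω) S.1} := by
      intro i
      have hEcup : Ei i ⊆ ⋃ T ∈ pts.powerset, (Ei i ∩ {hs | Tof i hs = T}) := by
        intro hs hhs
        exact Set.mem_biUnion (Finset.mem_coe.mpr (Finset.mem_powerset.mpr
          (Finset.filter_subset _ _))) ⟨hhs, rfl⟩
      have hdisj : (↑pts.powerset : Set (Finset X)).PairwiseDisjoint
          (fun T => ((Ei i ∩ {hs | Tof i hs = T}) ×ˢ Fix T : Set Ω)) := by
        intro T hT T' hT' hne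
        refine Set.disjoint_left.mpr ?_
        intro ω hω hω'
        obtain ⟨⟨_, h1⟩, _⟩ := hω
        obtain ⟨⟨_, h2⟩, _⟩ := hω'
        exact hne (h1 ▸ h2 ▸ rfl)
      calc c₀ * P (Ei i) ≤ c₀ * ∑ T ∈ pts.powerset, P (Ei i ∩ {hs | Tof i hs = T}) := by
            refine mul_le_mul_right (le_trans (measure_mono hEcup)
              (measure_biUnion_finset_le _ _)) _
        _ = ∑ T ∈ pts.powerset, c₀ * P (Ei i ∩ {hs | Tof i hs = T}) := Finset.mul_sum _ _ _
        _ ≤ ∑ T ∈ pts.powerset, μ ((Ei i ∩ {hs | Tof i hs = T}) ×ˢ Fix T) := by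
            refine Finset.sum_le_sum fun T hT => ?_
            rw [hμ, Measure.prod_prod]
            by_cases hcne : (Ei i ∩ {hs | Tof i hs = T}).Nonempty
            · obtain ⟨hs0, hhs0⟩ := hcne
              have hTc : T.card ≤ w₀ := by
                rw [← hhs0.2]
                exact hTcard i hs0 hhs0.1
              rw [mul_comm c₀ _]
              exact mul_le_mul_right (hFixlb T (Finset.mem_powerset.mp hT) hTc) _
            · rw [Set.not_nonempty_iff_eq_empty.mp hcne]
              simp
        _ = μ (⋃ T ∈ pts.powerset, ((Ei i ∩ {hs | Tof i hs = T}) ×ˢ Fix T)) := by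
            rw [measure_biUnion_finset hdisj (fun T hT =>
              ((hEimeas i).inter (hTofmeas i T (Finset.mem_powerset.mp hT))).prod
                (hFixmeas T))]
        _ ≤ μ {ω : Ω | Consistent (G i ω) S.1} := by
            refine measure_mono (Set.iUnion₂_subset fun T hT =>
              hincl i T (Finset.mem_powerset.mp hT))
    have hsum : (3/4:ℝ≥0∞) ≤ ∑ i, P (Ei i) := by
      have hsub : {hs : Fin k → X → Bool |
            ∃ i, popLoss (unifOn S.1) (hs i) ≤ ENNReal.ofReal (1/(2*(m:ℝ)))}
          ⊆ ⋃ i : Fin k, Ei i := by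
        rintro hs ⟨i, hi⟩
        exact Set.mem_iUnion.mpr ⟨i, hi⟩
      refine le_trans h34 (le_trans (measure_mono hsub)
        (le_trans (measure_iUnion_le _) ?_))
      rw [tsum_fintype]
    calc (3/4:ℝ≥0∞)^(n+1) * (3:ℝ≥0∞)⁻¹^w₀ = c₀ * (3/4) := by rw [hc₀]; ring
      _ ≤ c₀ * ∑ i, P (Ei i) := mul_le_mul_right hsum _
      _ = ∑ i, c₀ * P (Ei i) := Finset.mul_sum _ _ _
      _ ≤ ∑ i, μ {ω : Ω | Consistent (G i ω) S.1} :=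
          Finset.sum_le_sum fun i _ => hper i
  have main : ∀ i : Fin k, ∑' S : Vm H n, δ S * μ {ω : Ω | Consistent (G i ω) S.1} ≤ 1 :=
    fun i => master_cover δ hδ μ (G i) (hGmeas i)
  calc (3/4:ℝ≥0∞)^(n+1) * (3:ℝ≥0∞)⁻¹^w₀ * ∑' S, δ S
      = ∑' S : Vm H n, δ S * ((3/4:ℝ≥0∞)^(n+1) * (3:ℝ≥0∞)⁻¹^w₀) := by
        rw [ENNReal.tsum_mul_right, mul_comm]
    _ ≤ ∑' S : Vm H n, δ S * ∑ i, μ {ω : Ω | Consistent (G i ω) S.1} :=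
        ENNReal.tsum_le_tsum (fun S => mul_le_mul_right (key S) _)
    _ = ∑' S : Vm H n, ∑ i, δ S * μ {ω : Ω | Consistent (G i ω) S.1} :=
        tsum_congr (fun S => Finset.mul_sum _ _ _)
    _ = ∑ i, ∑' S : Vm H n, δ S * μ {ω : Ω | Consistent (G i ω) S.1} :=
        Summable.tsum_finsetSum (fun i _ => ENNReal.summable)
    _ ≤ ∑ _i : Fin k, 1 := Finset.sum_le_sum (fun i _ => main i)
    _ = k := by simp

end ContradictionGraph

namespace ContradictionGraph

lemma nat_key {m k n : ℕ} (hm : 2 ≤ m) (hn : 8*k + 24 ≤ n) :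
    k * 4^(n+1) < 2^n * 3^(n + 1 - n/(2*m)) := by
  have hw4 : n / (2*m) ≤ n / 4 := Nat.div_le_div_left (by omega) (by omega)
  set w := n / (2*m) with hw
  set q := n / 8 with hq
  set r := n % 8 with hr
  have hqr : n = 8*q + r := by omega
  have hr8 : r < 8 := by omega
  have hn4 : n / 4 ≤ 2*q + 1 := by omega
  have hwle : w ≤ 2*q + 1 := le_trans hw4 hn4
  have he : 6*q + r ≤ n + 1 - w := by omega
  have hq2 : k + 2 ≤ q := by omega
  have h29 : (2:ℕ)^(q+n) ≤ 3^(6*q+r) := by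
    have h512 : (2:ℕ)^(q+n) = 512^q * 2^r := by
      rw [show q + n = 9*q + r by omega, pow_add, pow_mul]
      norm_num
    have h729 : (3:ℕ)^(6*q+r) = 729^q * 3^r := by
      rw [pow_add, pow_mul]
      norm_num
    rw [h512, h729]
    exact Nat.mul_le_mul (Nat.pow_le_pow_left (by norm_num) q)
      (Nat.pow_le_pow_left (by norm_num) r)
  have h4k : 4*k < 2^q := by
    have h2k : k < 2^k := Nat.lt_two_pow_self
    calc 4*k < 4*(k+1) := by omega
      _ ≤ 4 * 2^k := by omega
      _ = 2^(k+2) := by rw [pow_add]; ring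
      _ ≤ 2^q := Nat.pow_le_pow_right (by omega) hq2
  have h4n : (4:ℕ)^(n+1) = 4 * (2^n * 2^n) := by
    rw [pow_succ, show (4:ℕ) = 2*2 by norm_num, mul_pow]
    ring
  calc k * 4^(n+1) = (4*k) * (2^n * 2^n) := by rw [h4n]; ring
    _ < 2^q * (2^n * 2^n) := by
        have hpos : 0 < 2^n * 2^n := by positivity
        exact mul_lt_mul_of_pos_right h4k hpos
    _ = 2^n * 2^(q+n) := by rw [pow_add]; ring
    _ ≤ 2^n * 3^(6*q+r) := Nat.mul_le_mul_left _ h29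
    _ ≤ 2^n * 3^(n + 1 - w) := Nat.mul_le_mul_left _ (Nat.pow_le_pow_right (by omega) he)

end ContradictionGraph

namespace ContradictionGraph

variable {X : Type*} [Countable X] [MeasurableSpace X] [MeasurableSingletonClass X]

set_option linter.unusedSectionVars false in
lemma part3_lt {H : Set (X → Bool)} {m k : ℕ} (hm2 : 2 ≤ m)
    (P : Measure (Fin k → X → Bool)) [IsProbabilityMeasure P]
    (hgood : ∀ D : Measure (X × Bool), IsProbabilityMeasure D → RealizableDist H D →
      (3 / 4 : ℝ≥0∞) ≤ P {hs | ∃ i : Fin k, popLoss D (hs i) ≤ ENNReal.ofReal (1 / (2 * (m:ℝ)))})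
    {n : ℕ} (hn : 8*k + 24 ≤ n) : fracCliqueNum H n < 2^n := by
  have hmne : m ≠ 0 := by omega
  have hnne : n ≠ 0 := by omega
  set w₀ := n / (2*m) with hw₀
  set c : ℝ≥0∞ := (3/4:ℝ≥0∞)^(n+1) * ((3:ℝ≥0∞))⁻¹^w₀ with hc
  have h34ne : (3/4:ℝ≥0∞) ≠ 0 := by
    simp [ENNReal.div_eq_zero_iff]
  have h34top : (3/4:ℝ≥0∞) ≠ ⊤ := by
    simp [ENNReal.div_eq_top]
  have hcne : c ≠ 0 := by
    rw [hc]
    exact mul_ne_zero (pow_ne_zero _ h34ne) (pow_ne_zero _ (by simp))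
  have hctop : c ≠ ⊤ := by
    rw [hc]
    exact ENNReal.mul_ne_top (ENNReal.pow_ne_top h34top)
      (ENNReal.pow_ne_top (ENNReal.inv_ne_top.mpr (by norm_num)))
  have hwle : w₀ ≤ n + 1 := le_trans (Nat.div_le_self _ _) (by omega)
  have hce : c = (3:ℝ≥0∞)^(n + 1 - w₀) / 4^(n+1) := by
    have h1 : (3/4:ℝ≥0∞)^(n+1) = 3^(n+1) * ((4:ℝ≥0∞)^(n+1))⁻¹ := by
      rw [div_eq_mul_inv, mul_pow, ENNReal.inv_pow]
    have h2 : (3:ℝ≥0∞)^(n+1) * ((3:ℝ≥0∞))⁻¹^w₀ = 3^(n+1-w₀) := by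
      have h3 : (3:ℝ≥0∞)^(n+1) = 3^(n+1-w₀) * 3^w₀ := by
        rw [← pow_add]; congr 1; omega
      rw [h3, mul_assoc, ← mul_pow,
        ENNReal.mul_inv_cancel (by norm_num) (by norm_num), one_pow, mul_one]
    calc c = (3:ℝ≥0∞)^(n+1) * ((3:ℝ≥0∞))⁻¹^w₀ * ((4:ℝ≥0∞)^(n+1))⁻¹ := by
          rw [hc, h1]; ring
      _ = (3:ℝ≥0∞)^(n+1-w₀) * ((4:ℝ≥0∞)^(n+1))⁻¹ := by rw [h2]
      _ = (3:ℝ≥0∞)^(n+1-w₀) / 4^(n+1) := by rw [div_eq_mul_inv]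
  have hklt : (k:ℝ≥0∞) < 2^n * c := by
    have hnat := nat_key hm2 hn
    have hcast : ((k:ℝ≥0∞)) * 4^(n+1) < 2^n * 3^(n + 1 - w₀) := by
      have hc2 : ((k * 4^(n+1) : ℕ) : ℝ≥0∞) < ((2^n * 3^(n + 1 - w₀) : ℕ) : ℝ≥0∞) := by
        exact_mod_cast hnat
      push_cast at hc2
      convert hc2 using 2 <;> norm_num
    rw [hce, ← mul_div_assoc]
    rw [ENNReal.lt_div_iff_mul_lt (Or.inl (by positivity))
      (Or.inl (ENNReal.pow_ne_top (by norm_num)))]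
    exact hcast
  have hle : fracCliqueNum H n ≤ (k:ℝ≥0∞) / c := by
    refine iSup₂_le fun δ hδ => ?_
    have hb := part3_bound hmne hnne P hgood δ hδ
    rw [ENNReal.le_div_iff_mul_le (Or.inl hcne) (Or.inl hctop)]
    rw [mul_comm]
    exact hb
  refine lt_of_le_of_lt hle ?_
  rw [ENNReal.div_lt_iff (Or.inl hcne) (Or.inl hctop)]
  exact hklt

set_option linter.unusedSectionVars false in
lemma part1_final {H : Set (X → Bool)} {m k : ℕ} (hm : m ≠ 0)
    (P : Measure (Fin k → X → Bool)) [IsProbabilityMeasure P]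
    (hgood : ∀ D : Measure (X × Bool), IsProbabilityMeasure D → RealizableDist H D →
      (3 / 4 : ℝ≥0∞) ≤ P {hs | ∃ i : Fin k, popLoss D (hs i) ≤ ENNReal.ofReal (1 / (2 * (m:ℝ)))}) :
    fracCliqueNum H m ≤ ENNReal.ofReal (4 * k / 3) := by
  have hofr : ENNReal.ofReal (4 * (k:ℝ) / 3) = (k : ℝ≥0∞) * 4 / 3 := by
    rw [ENNReal.ofReal_div_of_pos (by norm_num)]
    rw [show (4 * (k:ℝ)) = ((4*k : ℕ):ℝ) by push_cast; ring, ENNReal.ofReal_natCast]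
    rw [show ENNReal.ofReal (3:ℝ) = 3 by simp [ENNReal.ofReal_ofNat]]
    congr 1
    push_cast
    ring
  rw [hofr]
  refine iSup₂_le fun δ hδ => ?_
  have hb := part1_bound hm P hgood δ hδ
  have h34ne : (3/4:ℝ≥0∞) ≠ 0 := by simp [ENNReal.div_eq_zero_iff]
  have h34top : (3/4:ℝ≥0∞) ≠ ⊤ := by simp [ENNReal.div_eq_top]
  have ht : ∑' S, δ S ≤ (k:ℝ≥0∞) / (3/4) := by
    rw [ENNReal.le_div_iff_mul_le (Or.inl h34ne) (Or.inl h34top), mul_comm]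
    exact hb
  refine le_trans ht ?_
  rw [ENNReal.div_eq_inv_mul, ENNReal.inv_div (Or.inl (by norm_num)) (Or.inl (by norm_num))]
  rw [div_eq_mul_inv, div_eq_mul_inv]
  exact le_of_eq (by ring)

lemma part2_lt {k m : ℕ} (hm : Real.logb 2 (4 * k / 3) < m) :
    ENNReal.ofReal (4 * k / 3) < 2 ^ m := by
  rcases Nat.eq_zero_or_pos k with hk | hk
  · subst hk
    have h0 : ENNReal.ofReal (4 * ((0:ℕ):ℝ) / 3) = 0 := by norm_num
    rw [h0]
    exact ENNReal.pow_pos (by norm_num) m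
  · have hx : (0:ℝ) < 4 * k / 3 := by positivity
    have hlt : (4 * (k:ℝ) / 3) < 2 ^ (m:ℝ) :=
      (Real.logb_lt_iff_lt_rpow (by norm_num) hx).mp hm
    rw [Real.rpow_natCast] at hlt
    calc ENNReal.ofReal (4 * k / 3) < ENNReal.ofReal ((2:ℝ)^m) :=
          (ENNReal.ofReal_lt_ofReal_iff (by positivity)).mpr hlt
      _ = 2^m := by
          rw [ENNReal.ofReal_pow (by norm_num)]
          norm_num

end ContradictionGraph

namespace ContradictionGraph

variable {X : Type*} [Countable X] [MeasurableSpace X] [MeasurableSingletonClass X]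

set_option linter.unusedSectionVars false in
lemma popLoss_dirac (x : X) (b : Bool) (h : X → Bool) :
    popLoss (Measure.dirac ((x, b) : X × Bool)) h = if h x = b then 0 else 1 := by
  rw [popLoss, Measure.dirac_apply' _ (measurableSet_XB _)]
  by_cases hxb : h x = b
  · rw [if_pos hxb]
    exact Set.indicator_of_notMem (by simp [hxb]) _
  · rw [if_neg hxb]
    exact Set.indicator_of_mem (by simp [hxb]) _

set_option linter.unusedSectionVars false in
lemma tsum_le_one_noc {H : Set (X → Bool)}
    (hnc : ∀ x : X, ¬((∃ h ∈ H, h x = false) ∧ (∃ h ∈ H, h x = true)))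
    {n : ℕ} (δ : Vm H n → ℝ≥0∞) (hδ : IsFracClique H n δ) : ∑' S, δ S ≤ 1 := by
  have hind : IsIndep H n Set.univ := by
    rintro S - S' - hne ⟨x, hca⟩
    rcases hca with ⟨⟨i, hi⟩, ⟨j, hj⟩⟩ | ⟨⟨i, hi⟩, ⟨j, hj⟩⟩
    · obtain ⟨h, hHh, hc⟩ := S.2
      obtain ⟨h', hHh', hc'⟩ := S'.2
      refine hnc x ⟨⟨h, hHh, ?_⟩, ⟨h', hHh', ?_⟩⟩
      · have hv := hc i; rw [hi] at hv; exact hv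
      · have hv := hc' j; rw [hj] at hv; exact hv
    · obtain ⟨h, hHh, hc⟩ := S.2
      obtain ⟨h', hHh', hc'⟩ := S'.2
      refine hnc x ⟨⟨h', hHh', ?_⟩, ⟨h, hHh, ?_⟩⟩
      · have hv := hc' j; rw [hj] at hv; exact hv
      · have hv := hc i; rw [hi] at hv; exact hv
  have hle := hδ Set.univ hind
  rwa [tsum_univ] at hle

set_option linter.unusedSectionVars false in
lemma fracCliqueNum_eq_zero_of_isEmpty {H : Set (X → Bool)} {n : ℕ}
    (he : IsEmpty (Vm H n)) : fracCliqueNum H n = 0 := by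
  refine le_antisymm (iSup₂_le fun δ _ => ?_) zero_le
  rw [tsum_eq_sum (s := (∅ : Finset (Vm H n))) (fun S _ => (he.false S).elim)]
  simp

set_option linter.unusedSectionVars false in
lemma vm_nonempty_mono {H : Set (X → Bool)} {a b : ℕ} (hab : a ≤ b)
    (h : Nonempty (Vm H b)) : Nonempty (Vm H a) := by
  obtain ⟨⟨S, hS⟩⟩ := h
  obtain ⟨g, hg, hgc⟩ := hS
  exact ⟨⟨fun i => S (Fin.castLE hab i), ⟨g, hg, fun i => hgc _⟩⟩⟩

end ContradictionGraph

namespace ContradictionGraph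

/-- Let `m, k ∈ ℕ` with `m > log₂(4k/3)`. If there is a (Borel) probability
measure `P` on `({0,1}^X)^k` such that for every distribution `D` realizable by `H`, with
probability at least `3/4` over `(h_1,…,h_k) ∼ P` some `h_i` satisfies `L_D(h_i) ≤ 1/(2m)`,
then the fractional clique number of `G_m(H)` satisfies `ω*_m ≤ 4k/3 < 2^m`; in particular the
fractional clique dimension `CD*(H)` is finite. -/
theorem representation_implies_fracCliqueDim_finite {X : Type*} [Countable X]
    [MeasurableSpace X] [MeasurableSingletonClass X]
    (H : Set (X → Bool)) (hH : H.Nonempty) (m k : ℕ)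
    (hm : Real.logb 2 (4 * k / 3) < m)
    (P : Measure (Fin k → X → Bool)) (hP : IsProbabilityMeasure P)
    (hgood : ∀ D : Measure (X × Bool), IsProbabilityMeasure D → RealizableDist H D →
      (3 / 4 : ℝ≥0∞) ≤ P {hs | ∃ i : Fin k, popLoss D (hs i) ≤ ENNReal.ofReal (1 / (2 * m))}) :
    fracCliqueNum H m ≤ ENNReal.ofReal (4 * k / 3) ∧
    ENNReal.ofReal (4 * k / 3) < 2 ^ m ∧
    fracCliqueDim H ≠ ⊤ := by
  classical
  haveI := hP
  rcases Nat.eq_zero_or_pos k with hk0 | hkpos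
  · subst hk0
    have hm0 : 0 < m := by
      have hl0 : Real.logb 2 (4 * ((0:ℕ):ℝ) / 3) = 0 := by
        norm_num
      rw [hl0] at hm
      exact_mod_cast hm
    have hemp : ∀ n : ℕ, m ≤ n → IsEmpty (Vm H n) := by
      intro n hn
      rw [← not_nonempty_iff]
      intro hne
      obtain ⟨S⟩ := vm_nonempty_mono hn hne
      haveI := isProb_unifOn (X := X) (by omega : m ≠ 0) S.1
      have h34 := hgood (unifOn S.1) inferInstance (realizableDist_unifOn S.2)
      have hempty : {hs : Fin 0 → X → Bool | ∃ i : Fin 0,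
          popLoss (unifOn S.1) (hs i) ≤ ENNReal.ofReal (1/(2*(m:ℝ)))} = ∅ := by
        ext hs
        simp only [Set.mem_setOf_eq, Set.mem_empty_iff_false, iff_false, not_exists]
        intro i
        exact i.elim0
      rw [hempty, measure_empty] at h34
      have hpos : (0:ℝ≥0∞) < 3/4 := ENNReal.div_pos (by norm_num) (by norm_num)
      exact absurd h34 (not_le.mpr hpos)
    have hzero : fracCliqueNum H m = 0 := fracCliqueNum_eq_zero_of_isEmpty (hemp m le_rfl)
    refine ⟨?_, part2_lt hm, ?_⟩
    · rw [hzero]; exact zero_le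
    · have hdim : fracCliqueDim H ≤ (m : ℕ∞) := by
        refine iSup₂_le fun n hn => ?_
        by_cases hnm : n ≤ m
        · exact_mod_cast hnm
        · exfalso
          have hz : fracCliqueNum H n = 0 :=
            fracCliqueNum_eq_zero_of_isEmpty (hemp n (by omega))
          rw [hz] at hn
          exact (by norm_num : ((2:ℝ≥0∞)) ≠ 0) (pow_eq_zero_iff (by omega)|>.mp hn.symm)
      exact ne_top_of_le_ne_top (ENat.coe_ne_top _) hdim
  · have hm0 : m ≠ 0 := by
      have hlogb : (0:ℝ) ≤ Real.logb 2 (4 * k / 3) := by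
        refine Real.logb_nonneg (by norm_num) ?_
        have h1k : (1:ℝ) ≤ k := by exact_mod_cast hkpos
        linarith
      have hmpos : (0:ℝ) < m := lt_of_le_of_lt hlogb hm
      have : 0 < m := by exact_mod_cast hmpos
      omega
    refine ⟨part1_final hm0 P hgood, part2_lt hm, ?_⟩
    by_cases hm2 : 2 ≤ m
    · have hdim : fracCliqueDim H ≤ ((8*k + 24 : ℕ) : ℕ∞) := by
        refine iSup₂_le fun n hn => ?_
        by_cases hnN : n ≤ 8*k+24
        · exact_mod_cast hnN
        · exfalso
          have hlt := part3_lt hm2 P hgood (n := n) (by omega)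
          rw [hn] at hlt
          exact lt_irrefl _ hlt
      exact ne_top_of_le_ne_top (ENat.coe_ne_top _) hdim
    · have hm1 : m = 1 := by omega
      have hk1 : k = 1 := by
        by_contra hk
        have hk2 : 2 ≤ k := by omega
        have h83 : Real.logb 2 (8/3 : ℝ) ≤ Real.logb 2 (4 * k / 3) := by
          have h1 : (8/3 : ℝ) ≤ 4 * k / 3 := by
            have h2k : (2:ℝ) ≤ k := by exact_mod_cast hk2
            linarith
          exact (Real.logb_le_logb (by norm_num) (by norm_num) (by positivity)).mpr h1
        have hgt : (1:ℝ) < Real.logb 2 (8/3) := by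
          rw [Real.lt_logb_iff_rpow_lt (by norm_num) (by norm_num), Real.rpow_one]
          norm_num
        rw [hm1] at hm
        push_cast at hm
        linarith
      subst hm1
      subst hk1
      have hnc : ∀ x : X, ¬((∃ h ∈ H, h x = false) ∧ (∃ h ∈ H, h x = true)) := by
        rintro x ⟨hb0, hb1⟩
        have hreal : ∀ b : Bool, (∃ h ∈ H, h x = b) →
            RealizableDist H (Measure.dirac ((x, b) : X × Bool)) := by
          rintro b ⟨h, hHh, hb⟩
          refine le_antisymm (le_trans (iInf₂_le h hHh) ?_) zero_le
          rw [popLoss_dirac, if_pos hb]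
        have hev : ∀ b : Bool, (∃ h ∈ H, h x = b) →
            (3/4:ℝ≥0∞) ≤ P {hs : Fin 1 → X → Bool | hs 0 x = b} := by
          intro b hb
          have hg := hgood (Measure.dirac ((x,b) : X × Bool)) (by infer_instance)
            (hreal b hb)
          refine le_trans hg (measure_mono ?_)
          rintro hs ⟨i, hi⟩
          rw [popLoss_dirac] at hi
          by_cases hxb : hs i x = b
          · have hi0 : i = 0 := Subsingleton.elim i 0
            rw [← hi0]
            exact hxb
          · exfalso
            rw [if_neg hxb] at hi
            have hlt : ENNReal.ofReal (1/(2*((1:ℕ):ℝ))) < 1 := by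
              rw [show (1/(2*((1:ℕ):ℝ))) = (1/2 : ℝ) by norm_num]
              exact ENNReal.ofReal_lt_one.mpr (by norm_num)
            exact absurd hi (not_le.mpr hlt)
        have hA : MeasurableSet {hs : Fin 1 → X → Bool | hs 0 x = true} :=
          ((measurable_pi_apply x).comp (measurable_pi_apply 0)) (measurableSet_singleton _)
        have hcomp : {hs : Fin 1 → X → Bool | hs 0 x = false}
            = {hs : Fin 1 → X → Bool | hs 0 x = true}ᶜ := by
          ext hs; simp
        have h1 := hev true hb1
        have h0 := hev false hb0
        rw [hcomp] at h0
        have hadd := measure_add_measure_compl (μ := P) hA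
        rw [measure_univ] at hadd
        have hle1 : (3/4 + 3/4 : ℝ≥0∞) ≤ 1 := by
          rw [← hadd]
          exact add_le_add h1 h0
        have hgt : (1:ℝ≥0∞) < 3/4 + 3/4 := by
          rw [ENNReal.div_add_div_same]
          rw [ENNReal.lt_div_iff_mul_lt (Or.inl (by norm_num)) (Or.inl (by norm_num))]
          norm_num
        exact absurd hle1 (not_le.mpr hgt)
      have hbound : ∀ n : ℕ, fracCliqueNum H n ≤ 1 := by
        intro n
        exact iSup₂_le fun δ hδ => tsum_le_one_noc hnc δ hδ
      have hdim : fracCliqueDim H ≤ (0 : ℕ∞) := by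
        refine iSup₂_le fun n hn => ?_
        by_cases hn0 : n = 0
        · subst hn0; simp
        · exfalso
          have h2n : (2:ℝ≥0∞) ≤ 2^n := le_self_pow₀ (by norm_num) hn0
          have hb := hbound n
          rw [hn] at hb
          have : (2:ℝ≥0∞) ≤ 1 := le_trans h2n hb
          norm_num at this
      exact ne_top_of_le_ne_top (by simp) hdim

end ContradictionGraph
end

section
/- Let γ ∈ (0, 1/2), m ≥ 2, and let T be an odd integer with T ≥ 2·log₂(m)/γ². Let S = ((x_1,y_1),…,(x_m,y_m)) be a dataset of size m realizable by H. Then there exist maps D_1, D_2, …, D_T, where D_t assigns to each (t−1)-tuple (h_1,…,h_{t−1}) of hypotheses a probability distribution D_t(h_1,…,h_{t−1}) supported on the labeled examples { (x_1,y_1),…,(x_m,y_m) } of S (hence realizable by H), such that for every sequence of hypotheses h_1,…,h_T: if L_{D_t(h_1,…,h_{t−1})}(h_t) ≤ 1/2 − γ for every t ≤ T, then the majority vote MAJ(h_1,…,h_T) is consistent with S. -/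
open MeasureTheory
open scoped ENNReal

namespace ContradictionGraph
variable {X : Type*}

/-- The majority vote of `T` hypotheses: `x ↦ 1` iff `|{t : h_t(x) = 1}| > T/2`. -/
def Maj (T : ℕ) (h : Fin T → X → Bool) : X → Bool :=
  fun x => decide (T < 2 * (Finset.univ.filter fun t => h t x = true).card)

end ContradictionGraph

namespace ExpertsAux
set_option linter.unusedSectionVars false

variable {X : Type*} [MeasurableSpace X] {m : ℕ}

noncomputable def wt (c : ℝ) (S : Fin m → X × Bool) {n : ℕ} (prev : Fin n → X → Bool)
    (i : Fin m) : ℝ :=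
  c ^ (Finset.univ.filter fun s : Fin n => prev s (S i).1 ≠ (S i).2).card

noncomputable def Wt (c : ℝ) (S : Fin m → X × Bool) {n : ℕ} (prev : Fin n → X → Bool) : ℝ :=
  ∑ i, wt c S prev i

noncomputable def expD (c : ℝ) (S : Fin m → X × Bool) {n : ℕ} (prev : Fin n → X → Bool) :
    Measure (X × Bool) :=
  (ENNReal.ofReal (Wt c S prev))⁻¹ •
    Measure.sum fun i => ENNReal.ofReal (wt c S prev i) • Measure.dirac (S i)

lemma wt_pos {c : ℝ} (hc : 0 < c) (S : Fin m → X × Bool) {n : ℕ} (prev : Fin n → X → Bool)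
    (i : Fin m) : 0 < wt c S prev i := pow_pos hc _

lemma Wt_pos {c : ℝ} (hc : 0 < c) (hm : 0 < m) (S : Fin m → X × Bool) {n : ℕ}
    (prev : Fin n → X → Bool) : 0 < Wt c S prev :=
  Finset.sum_pos (fun i _ => wt_pos hc S prev i) (by simp [Finset.univ_nonempty_iff, Fin.pos_iff_nonempty.mp hm])

variable [Countable X] [MeasurableSingletonClass X]

lemma expD_apply {c : ℝ} (hc : 0 ≤ c) (S : Fin m → X × Bool) {n : ℕ} (prev : Fin n → X → Bool)
    (A : Set (X × Bool)) :
    expD c S prev A = (ENNReal.ofReal (Wt c S prev))⁻¹ *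
      ENNReal.ofReal (∑ i, A.indicator (fun _ => wt c S prev i) (S i)) := by
  have hA : MeasurableSet A := A.to_countable.measurableSet
  rw [expD, Measure.smul_apply, Measure.sum_apply _ hA, smul_eq_mul, tsum_fintype]
  congr 1
  rw [ENNReal.ofReal_sum_of_nonneg]
  · refine Finset.sum_congr rfl fun i _ => ?_
    rw [Measure.smul_apply, Measure.dirac_apply' _ hA, smul_eq_mul]
    by_cases hi : S i ∈ A
    · simp [Set.indicator_of_mem hi]
    · simp [Set.indicator_of_notMem hi]
  · intro i _
    exact Set.indicator_nonneg (fun _ _ => pow_nonneg hc _) _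

lemma expD_isProb {c : ℝ} (hc : 0 < c) (hm : 0 < m) (S : Fin m → X × Bool) {n : ℕ}
    (prev : Fin n → X → Bool) : IsProbabilityMeasure (expD c S prev) := by
  constructor
  rw [expD_apply hc.le]
  have : (∑ i, (Set.univ : Set (X × Bool)).indicator (fun _ => wt c S prev i) (S i))
      = Wt c S prev := by
    simp [Set.indicator_of_mem (Set.mem_univ _), Wt]
  rw [this]
  exact ENNReal.inv_mul_cancel (by simp [ENNReal.ofReal_pos, Wt_pos hc hm S prev, ne_of_gt])
    ENNReal.ofReal_ne_top

lemma expD_range {c : ℝ} (hc : 0 < c) (hm : 0 < m) (S : Fin m → X × Bool) {n : ℕ}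
    (prev : Fin n → X → Bool) : expD c S prev (Set.range S) = 1 := by
  rw [expD_apply hc.le]
  have : (∑ i, (Set.range S).indicator (fun _ => wt c S prev i) (S i)) = Wt c S prev := by
    refine Finset.sum_congr rfl fun i _ => Set.indicator_of_mem (Set.mem_range_self i) _
  rw [this]
  exact ENNReal.inv_mul_cancel (by simp [ENNReal.ofReal_pos, Wt_pos hc hm S prev, ne_of_gt])
    ENNReal.ofReal_ne_top

lemma sum_err_le {c : ℝ} (hc : 0 < c) (hm : 0 < m) (S : Fin m → X × Bool) {n : ℕ}
    (prev : Fin n → X → Bool) (g : X → Bool) {r : ℝ} (hr : 0 ≤ r)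
    (hle : expD c S prev {p | g p.1 ≠ p.2} ≤ ENNReal.ofReal r) :
    (∑ i, {p : X × Bool | g p.1 ≠ p.2}.indicator (fun _ => wt c S prev i) (S i))
      ≤ r * Wt c S prev := by
  rw [expD_apply hc.le] at hle
  set W := Wt c S prev with hW
  set B := ∑ i, {p : X × Bool | g p.1 ≠ p.2}.indicator (fun _ => wt c S prev i) (S i) with hB
  have hWpos : 0 < W := Wt_pos hc hm S prev
  have hW0 : ENNReal.ofReal W ≠ 0 := by simp [ENNReal.ofReal_pos, hWpos, ne_of_gt]
  have h2 : ENNReal.ofReal B ≤ ENNReal.ofReal W * ENNReal.ofReal r := by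
    calc ENNReal.ofReal B
        = ENNReal.ofReal W * ((ENNReal.ofReal W)⁻¹ * ENNReal.ofReal B) := by
          rw [← mul_assoc, ENNReal.mul_inv_cancel hW0 ENNReal.ofReal_ne_top, one_mul]
      _ ≤ ENNReal.ofReal W * ENNReal.ofReal r := mul_le_mul_right hle _
  rw [← ENNReal.ofReal_mul hWpos.le] at h2
  have := (ENNReal.ofReal_le_ofReal_iff (by positivity)).mp h2
  linarith [this]

end ExpertsAux

namespace ContradictionGraph

/-- (Experts lemma.) Let `γ ∈ (0,1/2)`, `m ≥ 2`, and let `T` be an odd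
integer with `T ≥ 2·log₂(m)/γ²`. Let `S` be a dataset of size `m` realizable by `H`. Then there
exist maps `D_1, …, D_T`, where `D_t` assigns to each `(t−1)`-tuple of hypotheses a probability
distribution supported on the labeled examples of `S` (hence realizable by `H`), such that for
every sequence of hypotheses `h_1, …, h_T`: if `L_{D_t(h_1,…,h_{t−1})}(h_t) ≤ 1/2 − γ` for
every `t ≤ T`, then the majority vote `MAJ(h_1,…,h_T)` is consistent with `S`. -/
theorem experts_lemma {X : Type*} [Countable X]
    [MeasurableSpace X] [MeasurableSingletonClass X]
    (H : Set (X → Bool)) (hH : H.Nonempty)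
    (γ : ℝ) (hγ0 : 0 < γ) (hγ1 : γ < 1 / 2)
    (m : ℕ) (hm : 2 ≤ m)
    (T : ℕ) (hTodd : Odd T) (hT : 2 * Real.logb 2 m / γ ^ 2 ≤ T)
    (S : Fin m → X × Bool) (hS : Realizable H S) :
    ∃ D : (t : Fin T) → (Fin t.1 → X → Bool) → Measure (X × Bool),
      (∀ (t : Fin T) (prev : Fin t.1 → X → Bool),
        IsProbabilityMeasure (D t prev) ∧ D t prev (Set.range S) = 1) ∧
      ∀ h : Fin T → X → Bool,
        (∀ t : Fin T,
          popLoss (D t fun j => h ⟨j.1, j.2.trans t.2⟩) (h t) ≤ ENNReal.ofReal (1 / 2 - γ)) →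
        Consistent (Maj T h) S := by

  classical
  have hγ2 : (0:ℝ) < 1 - 2*γ := by linarith
  set c : ℝ := (1+2*γ)/(1-2*γ) with hcdef
  have hc1 : 1 < c := by rw [lt_div_iff₀ hγ2]; linarith
  have hc0 : 0 < c := by linarith
  have hm0 : 0 < m := by omega
  refine ⟨fun t prev => ExpertsAux.expD c S prev,
    fun t prev => ⟨ExpertsAux.expD_isProb hc0 hm0 S prev, ExpertsAux.expD_range hc0 hm0 S prev⟩,
    ?_⟩
  intro h hcond
  by_contra hnc
  unfold Consistent at hnc
  push_neg at hnc
  obtain ⟨i0, hi0⟩ := hnc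
  -- mistake counts
  set f : ℕ → Fin m → ℕ := fun s i =>
    if hs : s < T then (if h ⟨s, hs⟩ (S i).1 ≠ (S i).2 then 1 else 0) else 0 with hfdef
  set Mi : ℕ → Fin m → ℕ := fun n i => ∑ s ∈ Finset.range n, f s i with hMidef
  set Wn : ℕ → ℝ := fun n => ∑ i, c ^ (Mi n i) with hWndef
  have hmatch : ∀ (t : Fin T) (i : Fin m),
      (Finset.univ.filter fun s : Fin t.1 =>
        h ⟨s.1, s.2.trans t.2⟩ (S i).1 ≠ (S i).2).card = Mi t.1 i := by
    intro t i
    rw [Finset.card_filter]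
    have hMr : Mi t.1 i = ∑ s ∈ Finset.range t.1, f s i := rfl
    rw [hMr, ← Fin.sum_univ_eq_sum_range (fun s => f s i) t.1]
    refine Finset.sum_congr rfl fun s _ => ?_
    simp only [hfdef, dif_pos (s.2.trans t.2)]
  have hwt : ∀ (t : Fin T) (i : Fin m),
      ExpertsAux.wt c S (fun j : Fin t.1 => h ⟨j.1, j.2.trans t.2⟩) i = c ^ Mi t.1 i := by
    intro t i
    rw [ExpertsAux.wt, hmatch t i]
  have hWt : ∀ (t : Fin T),
      ExpertsAux.Wt c S (fun j : Fin t.1 => h ⟨j.1, j.2.trans t.2⟩) = Wn t.1 := by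
    intro t
    rw [ExpertsAux.Wt, hWndef]
    exact Finset.sum_congr rfl fun i _ => hwt t i
  have hkey : (c - 1) * (1/2 - γ) = 2*γ := by
    rw [hcdef]; field_simp; ring
  -- recurrence
  have hWrec : ∀ n, (hn : n < T) → Wn (n+1) ≤ (1+2*γ) * Wn n := by
    intro n hn
    set t : Fin T := ⟨n, hn⟩ with htdef
    have hB := ExpertsAux.sum_err_le hc0 hm0 S
      (fun j : Fin t.1 => h ⟨j.1, j.2.trans t.2⟩) (h t) (r := 1/2 - γ) (by linarith) (hcond t)
    rw [hWt t] at hB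
    have hBval : (∑ i, {p : X × Bool | h t p.1 ≠ p.2}.indicator
        (fun _ => ExpertsAux.wt c S (fun j : Fin t.1 => h ⟨j.1, j.2.trans t.2⟩) i) (S i))
        = ∑ i, (if h t (S i).1 ≠ (S i).2 then c ^ Mi n i else 0) := by
      refine Finset.sum_congr rfl fun i _ => ?_
      rw [hwt t i]
      by_cases hi : h t (S i).1 = (S i).2
      · have hnm : S i ∉ {p : X × Bool | h t p.1 ≠ p.2} := fun hmem => hmem hi
        rw [Set.indicator_of_notMem hnm, if_neg (fun hc => hc hi)]
      · have hmem : S i ∈ {p : X × Bool | h t p.1 ≠ p.2} := hi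
        rw [Set.indicator_of_mem hmem, if_pos hi]
    rw [hBval] at hB
    set B := ∑ i, (if h t (S i).1 ≠ (S i).2 then c ^ Mi n i else 0) with hBdef
    have hBnn : 0 ≤ B := Finset.sum_nonneg fun i _ => by positivity
    have hstep : Wn (n+1) = Wn n + (c-1) * B := by
      rw [hWndef, hBdef]
      simp only []
      rw [Finset.mul_sum, ← Finset.sum_add_distrib]
      refine Finset.sum_congr rfl fun i _ => ?_
      have hMi : Mi (n+1) i = Mi n i + (if h t (S i).1 ≠ (S i).2 then 1 else 0) := by
        rw [hMidef]
        simp only []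
        rw [Finset.sum_range_succ]
        congr 1
        simp only [hfdef, dif_pos hn]
        rfl
      rw [hMi]
      by_cases hi : h t (S i).1 ≠ (S i).2
      · rw [if_pos hi, if_pos hi, pow_succ]; ring
      · rw [if_neg hi, if_neg hi]; ring
    have hWnn : 0 ≤ Wn n := Finset.sum_nonneg fun i _ => by positivity
    calc Wn (n+1) = Wn n + (c-1)*B := hstep
      _ ≤ Wn n + (c-1)*((1/2-γ)*Wn n) := by
          have : (c-1)*B ≤ (c-1)*((1/2-γ)*Wn n) := by
            apply mul_le_mul_of_nonneg_left _ (by linarith)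
            linarith [hB]
          linarith
      _ = (1+2*γ) * Wn n := by nlinarith [hkey]
  have hWle : ∀ n, n ≤ T → Wn n ≤ m * (1+2*γ)^n := by
    intro n
    induction n with
    | zero =>
      intro _
      simp [hWndef, hMidef]
    | succ k ih =>
      intro hk1
      have hk : k < T := hk1
      calc Wn (k+1) ≤ (1+2*γ) * Wn k := hWrec k hk
        _ ≤ (1+2*γ) * ((m:ℝ) * (1+2*γ)^k) :=
            mul_le_mul_of_nonneg_left (ih hk.le) (by linarith)
        _ = (m:ℝ) * (1+2*γ)^(k+1) := by ring
  -- the bad example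
  set x := (S i0).1 with hxdef
  set A := (Finset.univ.filter fun t : Fin T => h t x = true).card with hAdef
  set K := (Finset.univ.filter fun t : Fin T => h t x ≠ (S i0).2).card with hKdef
  obtain ⟨k, hk⟩ := hTodd
  have hAK : (Finset.univ.filter fun t : Fin T => h t x = true).card +
      (Finset.univ.filter fun t : Fin T => ¬ (h t x = true)).card = T := by
    rw [Finset.card_filter_add_card_filter_not]
    simp
  have hK2 : T < 2 * K := by
    by_cases hTA : T < 2 * A
    · have hMt : Maj T h x = true := decide_eq_true hTA
      have hy : (S i0).2 = false := by
        cases hy' : (S i0).2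
        · rfl
        · exact absurd (hMt.trans hy'.symm) hi0
      have hKA : K = A := by
        rw [hKdef, hAdef]
        congr 1
        apply Finset.filter_congr
        intro t _
        simp [hy]
      omega
    · have hMf : Maj T h x = false := decide_eq_false hTA
      have hy : (S i0).2 = true := by
        cases hy' : (S i0).2
        · exact absurd (hMf.trans hy'.symm) hi0
        · rfl
      have hKA : K = (Finset.univ.filter fun t : Fin T => ¬ (h t x = true)).card := by
        rw [hKdef]
        congr 1
        apply Finset.filter_congr
        intro t _
        simp [hy]
      omega
  have hMiT : Mi T i0 = K := by
    rw [hMidef, hKdef]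
    simp only []
    rw [← Fin.sum_univ_eq_sum_range (fun s => f s i0) T, Finset.card_filter]
    refine Finset.sum_congr rfl fun t _ => ?_
    simp only [hfdef, dif_pos t.2, hxdef]
  have h1 : c ^ Mi T i0 ≤ Wn T :=
    Finset.single_le_sum (f := fun i => c ^ Mi T i) (fun i _ => by positivity) (Finset.mem_univ i0)
  have h2 : Wn T ≤ (m:ℝ) * (1+2*γ)^T := hWle T le_rfl
  set P : ℝ := (m:ℝ) * (1+2*γ)^T with hPdef
  have hP0 : 0 ≤ P := by positivity
  have hsq : c ^ (K*2) ≤ P^2 := by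
    rw [pow_mul]
    apply pow_le_pow_left₀ (by positivity)
    rw [← hMiT]; linarith
  have hcT : c^T ≤ c^(K*2) := pow_le_pow_right₀ hc1.le (by omega)
  -- contradiction: P^2 < c^T
  have hm1 : (2:ℝ) ≤ m := by exact_mod_cast hm
  have hq0 : (0:ℝ) < 1 - 4*γ^2 := by nlinarith
  set q : ℝ := 1 - 4*γ^2 with hqdef
  have hlogm : 0 < Real.log m := Real.log_pos (by linarith)
  have hlogq : Real.log q ≤ -(4*γ^2) := by
    linarith [Real.log_le_sub_one_of_pos hq0]
  have hTγ : 2 * Real.logb 2 m ≤ (T:ℝ) * γ^2 := by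
    have hγ2pos : (0:ℝ) < γ^2 := by positivity
    have := mul_le_mul_of_nonneg_right hT hγ2pos.le
    rwa [div_mul_cancel₀] at this
    exact hγ2pos.ne'
  have hlog2 : Real.log 2 ≤ 1 := by
    have := Real.log_le_sub_one_of_pos (by norm_num : (0:ℝ) < 2)
    linarith
  have hlogb : Real.log m ≤ Real.logb 2 m := by
    rw [Real.logb, le_div_iff₀ (Real.log_pos one_lt_two)]
    exact mul_le_of_le_one_right hlogm.le hlog2
  have hkey2 : 2 * Real.log m < (T:ℝ) * (-(Real.log q)) := by
    have hT0 : (0:ℝ) ≤ T := by positivity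
    have h4 : (T:ℝ) * (4*γ^2) ≤ (T:ℝ) * (-(Real.log q)) :=
      mul_le_mul_of_nonneg_left (by linarith) hT0
    linarith [h4, hTγ, hlogb, hlogm]
  have hmq : (m:ℝ)^2 * q^T < 1 := by
    have hx0 : (0:ℝ) < (m:ℝ)^2 * q^T := by positivity
    have hlog : Real.log ((m:ℝ)^2 * q^T) < 0 := by
      rw [Real.log_mul (by positivity) (by positivity), Real.log_pow, Real.log_pow]
      push_cast
      linarith
    calc (m:ℝ)^2 * q^T = Real.exp (Real.log ((m:ℝ)^2 * q^T)) := (Real.exp_log hx0).symm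
      _ < Real.exp 0 := Real.exp_lt_exp.mpr hlog
      _ = 1 := Real.exp_zero
  have hlt : P^2 < c^T := by
    have hcTeq : c^T = (1+2*γ)^T / (1-2*γ)^T := by rw [hcdef, div_pow]
    rw [hcTeq, lt_div_iff₀ (by positivity)]
    have hmul : ((1+2*γ)*(1-2*γ)) = q := by rw [hqdef]; ring
    calc P^2 * (1-2*γ)^T = (1+2*γ)^T * ((m:ℝ)^2 * q^T) := by
          rw [hPdef, ← hmul, mul_pow (1+2*γ) (1-2*γ) T]; ring
      _ < (1+2*γ)^T * 1 := by
          apply mul_lt_mul_of_pos_left hmq (by positivity)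
      _ = (1+2*γ)^T := mul_one _
  have : c^T ≤ P^2 := le_trans hcT hsq
  linarith


end ContradictionGraph
end

section
/- Let γ ∈ (0, 1/2), β > 0, m ≥ 2, and let T be an odd integer with T ≥ 2·log₂(m)/γ². Suppose μ̃ is a Borel probability measure on {0,1}^X such that for every distribution D over labeled examples that is realizable by H, μ̃({ h : L_D(h) ≤ 1/2 − γ }) ≥ β. Then for every dataset S of size m realizable by H, the probability, over T hypotheses h_1,…,h_T drawn i.i.d. from μ̃, that the majority vote MAJ(h_1,…,h_T) is consistent with S is at least β^T. -/
open MeasureTheory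
open scoped ENNReal

namespace BoostAux

open Finset MeasureTheory
open scoped ENNReal

variable {m : ℕ}

noncomputable def wt (γ : ℝ) (L : List (Fin m → Bool)) (i : Fin m) : ℝ :=
  ((1 + 2*γ) / (1 - 2*γ)) ^ (L.countP fun q => q i)

noncomputable def Wt (γ : ℝ) (L : List (Fin m → Bool)) : ℝ := ∑ i, wt γ L i

def GoodSet (γ : ℝ) (L : List (Fin m → Bool)) : Set (Fin m → Bool) :=
  {q | ∑ i ∈ Finset.univ.filter (fun i => q i = true), wt γ L i ≤ (1/2 - γ) * Wt γ L}

lemma a_pos {γ : ℝ} (hγ0 : 0 < γ) (hγ1 : γ < 1/2) : 0 < (1 + 2*γ) / (1 - 2*γ) := by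
  apply div_pos <;> linarith

lemma a_one_lt {γ : ℝ} (hγ0 : 0 < γ) (hγ1 : γ < 1/2) : 1 < (1 + 2*γ) / (1 - 2*γ) := by
  rw [lt_div_iff₀ (by linarith)]; linarith

lemma wt_pos {γ : ℝ} (hγ0 : 0 < γ) (hγ1 : γ < 1/2) (L : List (Fin m → Bool)) (i : Fin m) :
    0 < wt γ L i := pow_pos (a_pos hγ0 hγ1) _

lemma Wt_pos {γ : ℝ} (hγ0 : 0 < γ) (hγ1 : γ < 1/2) (hm : 0 < m) (L : List (Fin m → Bool)) :
    0 < Wt γ L :=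
  Finset.sum_pos (fun i _ => wt_pos hγ0 hγ1 L i) ⟨⟨0, hm⟩, Finset.mem_univ _⟩

lemma wt_append {γ : ℝ} (L : List (Fin m → Bool)) (q : Fin m → Bool) (i : Fin m) :
    wt γ (L ++ [q]) i = wt γ L i + (if q i = true then ((1 + 2*γ) / (1 - 2*γ) - 1) * wt γ L i else 0) := by
  unfold wt
  rw [List.countP_append]
  by_cases h : q i
  · simp only [h, if_true]
    have : (L.countP fun q => q i) + List.countP (fun q => q i) [q] = (L.countP fun q => q i) + 1 := by
      simp [List.countP_cons, h]
    rw [this, pow_succ]; ring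
  · have h' : q i = false := by simp [Bool.not_eq_true] at h; exact h
    simp [List.countP_cons, h']

lemma Wt_step {γ : ℝ} (hγ0 : 0 < γ) (hγ1 : γ < 1/2) (L : List (Fin m → Bool)) (q : Fin m → Bool)
    (hq : q ∈ GoodSet γ L) :
    Wt γ (L ++ [q]) ≤ (1 + 2*γ) * Wt γ L := by
  have key : Wt γ (L ++ [q]) =
      Wt γ L + ((1 + 2*γ) / (1 - 2*γ) - 1) * ∑ i ∈ Finset.univ.filter (fun i => q i = true), wt γ L i := by
    unfold Wt
    rw [Finset.mul_sum, Finset.sum_filter, ← Finset.sum_add_distrib]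
    refine Finset.sum_congr rfl fun i _ => ?_
    rw [wt_append]
  rw [key]
  have h2γ : (0:ℝ) < 1 - 2*γ := by linarith
  have ha : ((1 + 2*γ) / (1 - 2*γ) - 1) = 4*γ / (1 - 2*γ) := by
    field_simp; ring
  have hfsum : (0:ℝ) ≤ 4*γ / (1 - 2*γ) := by positivity
  have hterm : ((1 + 2*γ) / (1 - 2*γ) - 1) * ∑ i ∈ Finset.univ.filter (fun i => q i = true), wt γ L i
      ≤ (4*γ / (1 - 2*γ)) * ((1/2 - γ) * Wt γ L) := by
    rw [ha]
    exact mul_le_mul_of_nonneg_left hq hfsum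
  have heq : (4*γ / (1 - 2*γ)) * ((1/2 - γ) * Wt γ L) = 2*γ * Wt γ L := by
    rw [div_mul_eq_mul_div, div_eq_iff (ne_of_gt h2γ)]; ring
  rw [heq] at hterm
  linarith

lemma Wt_nil (γ : ℝ) : Wt γ ([] : List (Fin m → Bool)) = m := by
  simp [Wt, wt]

lemma Wt_total {γ : ℝ} (hγ0 : 0 < γ) (hγ1 : γ < 1/2) :
    ∀ L : List (Fin m → Bool), (∀ (t : ℕ) (ht : t < L.length), L[t] ∈ GoodSet γ (L.take t)) →
      Wt γ L ≤ (1 + 2*γ) ^ L.length * m := by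
  intro L
  induction L using List.reverseRecOn with
  | nil => intro _; simp [Wt_nil]
  | append_singleton M q ih =>
    intro hgood
    have hM : ∀ (t : ℕ) (ht : t < M.length), M[t] ∈ GoodSet γ (M.take t) := by
      intro t ht
      have h1 : t < (M ++ [q]).length := by simp; omega
      have := hgood t h1
      rwa [List.getElem_append_left ht, List.take_append_of_le_length ht.le] at this
    have hq : q ∈ GoodSet γ M := by
      have h1 : M.length < (M ++ [q]).length := by simp
      have := hgood M.length h1
      have e1 : (M ++ [q])[M.length]'h1 = q := by
        rw [List.getElem_append_right (le_refl _)]; simp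
      have e2 : List.take M.length (M ++ [q]) = M := by simp
      rw [e2] at this
      rwa [e1] at this
    calc Wt γ (M ++ [q]) ≤ (1 + 2*γ) * Wt γ M := Wt_step hγ0 hγ1 M q hq
    _ ≤ (1 + 2*γ) * ((1 + 2*γ) ^ M.length * m) := by
        apply mul_le_mul_of_nonneg_left (ih hM) (by linarith)
    _ = (1 + 2*γ) ^ (M ++ [q]).length * m := by
        simp [pow_succ]; ring

lemma analytic_ineq {γ : ℝ} (hγ0 : 0 < γ) (hγ1 : γ < 1/2) {m : ℕ} (hm : 2 ≤ m) (k : ℕ)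
    (hT : 2 * Real.logb 2 m / γ ^ 2 ≤ (2 * k + 1 : ℕ)) :
    (m : ℝ) * ((1 - 4*γ^2) ^ k * (1 - 2*γ)) < 1 := by
  have hm0 : (0:ℝ) < m := by positivity
  have hm2 : (2:ℝ) ≤ m := by exact_mod_cast hm
  have hγ2 : (0:ℝ) < γ^2 := by positivity
  have hγ14 : γ^2 < 1/4 := by nlinarith
  have hlogm : Real.log 2 ≤ Real.log m := Real.log_le_log (by norm_num) hm2
  have hlog2pos : (0:ℝ) < Real.log 2 := Real.log_pos (by norm_num)
  have hlogmpos : (0:ℝ) < Real.log m := lt_of_lt_of_le hlog2pos hlogm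
  have h1 : 2 * Real.logb 2 m ≤ γ^2 * (2*k+1 : ℕ) := by
    rw [div_le_iff₀ hγ2] at hT; linarith [hT]
  have hlogb : Real.logb 2 m = Real.log m / Real.log 2 := rfl
  have h2 : Real.log m ≤ Real.logb 2 m := by
    rw [hlogb, le_div_iff₀ hlog2pos]
    nlinarith [Real.log_two_lt_d9]
  have h3 : 4 * Real.log m - 1/2 ≤ 4 * γ^2 * k := by
    push_cast at h1
    nlinarith
  have hklog : Real.log m < 4 * γ^2 * k := by
    nlinarith [Real.log_two_gt_d9, hlogm]
  have hb0 : (0:ℝ) ≤ 1 - 4*γ^2 := by nlinarith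
  have hbe : 1 - 4*γ^2 ≤ Real.exp (-(4*γ^2)) := by
    have := Real.add_one_le_exp (-(4*γ^2)); linarith
  have hpow : (1 - 4*γ^2)^k ≤ Real.exp (-(4*γ^2)) ^ k := pow_le_pow_left₀ hb0 hbe k
  have hexp : Real.exp (-(4*γ^2)) ^ k = Real.exp (-(4*γ^2*k)) := by
    rw [← Real.exp_nat_mul]; ring_nf
  have hlt : Real.exp (-(4*γ^2*k)) < Real.exp (-(Real.log m)) :=
    Real.exp_lt_exp.mpr (by linarith)
  have hexplog : Real.exp (-(Real.log m)) = 1 / m := by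
    rw [Real.exp_neg, Real.exp_log hm0]; exact inv_eq_one_div _
  have hfin : (1 - 4*γ^2)^k * (1 - 2*γ) < 1 / m := by
    calc (1 - 4*γ^2)^k * (1 - 2*γ) ≤ (1 - 4*γ^2)^k * 1 := by
          apply mul_le_mul_of_nonneg_left (by linarith) (by positivity)
    _ = (1 - 4*γ^2)^k := mul_one _
    _ ≤ Real.exp (-(4*γ^2)) ^ k := hpow
    _ = Real.exp (-(4*γ^2*k)) := hexp
    _ < 1 / m := by rw [← hexplog]; exact hlt
  calc (m:ℝ) * ((1 - 4*γ^2) ^ k * (1 - 2*γ)) < m * (1/m) := by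
        exact mul_lt_mul_of_pos_left hfin hm0
  _ = 1 := by field_simp

lemma count_le {γ : ℝ} (hγ0 : 0 < γ) (hγ1 : γ < 1/2) {m : ℕ} (hm : 2 ≤ m) (k : ℕ)
    (hT : 2 * Real.logb 2 m / γ ^ 2 ≤ (2 * k + 1 : ℕ))
    (L : List (Fin m → Bool)) (hlen : L.length = 2 * k + 1)
    (hgood : ∀ (t : ℕ) (ht : t < L.length), L[t] ∈ GoodSet γ (L.take t)) (i : Fin m) :
    L.countP (fun q => q i) ≤ k := by
  by_contra hc
  push_neg at hc
  have hcount : k + 1 ≤ L.countP (fun q => q i) := hc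
  set a := (1 + 2*γ) / (1 - 2*γ) with ha
  have ha1 : 1 < a := a_one_lt hγ0 hγ1
  have ha0 : 0 < a := by linarith
  have h1 : a ^ (k+1) ≤ wt γ L i := by
    unfold wt
    exact pow_le_pow_right₀ ha1.le hcount
  have h2 : wt γ L i ≤ Wt γ L := by
    unfold Wt
    exact Finset.single_le_sum (fun j _ => (wt_pos hγ0 hγ1 L j).le) (Finset.mem_univ i)
  have h3 : Wt γ L ≤ (1 + 2*γ) ^ (2*k+1) * m := by
    have := Wt_total hγ0 hγ1 L hgood
    rwa [hlen] at this
  have hkey : a ^ (k+1) ≤ (1 + 2*γ) ^ (2*k+1) * m := by linarith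
  have h2γ : (0:ℝ) < 1 - 2*γ := by linarith
  have h2γ' : (0:ℝ) < 1 + 2*γ := by linarith
  have hain : (m:ℝ) * ((1 - 4*γ^2) ^ k * (1 - 2*γ)) < 1 := analytic_ineq hγ0 hγ1 hm k hT
  have hexp : a ^ (k+1) * (1 - 2*γ)^(k+1) = (1 + 2*γ)^(k+1) := by
    rw [ha, div_pow, div_mul_cancel₀]
    positivity
  have hmul : a ^ (k+1) * (1 - 2*γ)^(k+1) ≤ (1 + 2*γ) ^ (2*k+1) * m * (1 - 2*γ)^(k+1) :=
    mul_le_mul_of_nonneg_right hkey (by positivity)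
  rw [hexp] at hmul
  have hsplit : (1 + 2*γ) ^ (2*k+1) * (m:ℝ) * (1 - 2*γ)^(k+1)
      = (1 + 2*γ)^(k+1) * ((m:ℝ) * ((1 - 4*γ^2) ^ k * (1 - 2*γ))) := by
    have h2k : (1+2*γ:ℝ)^(2*k+1) = (1+2*γ)^(k+1) * (1+2*γ)^k := by
      have := pow_add (1+2*γ:ℝ) (k+1) k
      rw [show (k+1)+k = 2*k+1 from by ring] at this
      exact this
    have h4 : (1-4*γ^2:ℝ)^k = (1+2*γ)^k * (1-2*γ)^k := by
      rw [← mul_pow, show ((1+2*γ)*(1-2*γ):ℝ) = 1-4*γ^2 from by ring]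
    rw [h2k, h4, pow_succ]
    ring
  rw [hsplit] at hmul
  have hgt : (1 + 2*γ)^(k+1) * ((m:ℝ) * ((1 - 4*γ^2) ^ k * (1 - 2*γ))) < (1 + 2*γ)^(k+1) * 1 :=
    mul_lt_mul_of_pos_left hain (by positivity)
  rw [mul_one] at hgt
  linarith

open scoped Classical in
lemma sum_good {Pat : Type*} [Fintype Pat] (c : Pat → ℝ≥0∞) (β : ℝ≥0∞) :
    ∀ (T : ℕ) (Good : List Pat → Set Pat),
      (∀ L : List Pat, β ≤ ∑ q : Pat, if q ∈ Good L then c q else 0) →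
      β ^ T ≤ ∑ p : Fin T → Pat,
        if (∀ t : Fin T, p t ∈ Good ((List.ofFn p).take t.1)) then ∏ t, c (p t) else 0 := by
  intro T
  induction T with
  | zero =>
    intro Good hG
    have : ∀ p : Fin 0 → Pat, (∀ t : Fin 0, p t ∈ Good ((List.ofFn p).take t.1)) := by
      intro p t; exact absurd t.2 (by omega)
    simp [this]
  | succ T ih =>
    intro Good hG
    have hreindex : ∑ p : Fin (T+1) → Pat,
          (if (∀ t : Fin (T+1), p t ∈ Good ((List.ofFn p).take t.1)) then ∏ t, c (p t) else 0)
        = ∑ q : Pat, ∑ p : Fin T → Pat,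
          (if (q ∈ Good [] ∧
              ∀ s : Fin T, p s ∈ Good (q :: (List.ofFn p).take s.1)) then c q * ∏ s, c (p s) else 0) := by
      rw [← Equiv.sum_comp (Fin.consEquiv (fun _ : Fin (T+1) => Pat))
        (fun p : Fin (T+1) → Pat =>
          if (∀ t : Fin (T+1), p t ∈ Good ((List.ofFn p).take t.1)) then ∏ t, c (p t) else 0),
        Fintype.sum_prod_type]
      refine Finset.sum_congr rfl fun q _ => Finset.sum_congr rfl fun p _ => ?_
      have hofn : List.ofFn (Fin.consEquiv (fun _ : Fin (T+1) => Pat) (q, p)) = q :: List.ofFn p := by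
        show List.ofFn (Fin.cons q p) = _
        rw [List.ofFn_succ]
        congr 1
      have hcond : (∀ t : Fin (T+1), (Fin.cons q p : Fin (T+1) → Pat) t ∈
            Good ((List.ofFn (Fin.cons q p : Fin (T+1) → Pat)).take t.1)) ↔
          (q ∈ Good [] ∧ ∀ s : Fin T, p s ∈ Good (q :: (List.ofFn p).take s.1)) := by
        rw [show List.ofFn (Fin.cons q p : Fin (T+1) → Pat) = q :: List.ofFn p from hofn]
        constructor
        · intro h
          refine ⟨by simpa using h 0, fun s => ?_⟩
          have := h s.succ
          rwa [Fin.cons_succ, show (s.succ : Fin (T+1)).1 = s.1 + 1 from rfl, List.take_succ_cons] at this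
        · rintro ⟨h0, hs⟩ t
          refine Fin.cases ?_ ?_ t
          · simpa using h0
          · intro s
            rw [Fin.cons_succ, show (s.succ : Fin (T+1)).1 = s.1 + 1 from rfl, List.take_succ_cons]
            exact hs s
      have hprod : (∏ t : Fin (T+1), c ((Fin.cons q p : Fin (T+1) → Pat) t)) = c q * ∏ s, c (p s) := by
        rw [Fin.prod_univ_succ]
        simp [Fin.cons_succ]
      show (if _ then _ else _) = _
      rw [← hprod]
      congr 1
      · exact propext hcond
    rw [hreindex]
    have hinner : ∀ q : Pat, (if q ∈ Good [] then c q else 0) * β ^ T ≤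
        ∑ p : Fin T → Pat,
          (if (q ∈ Good [] ∧
              ∀ s : Fin T, p s ∈ Good (q :: (List.ofFn p).take s.1)) then c q * ∏ s, c (p s) else 0) := by
      intro q
      by_cases hq : q ∈ Good []
      · have hIH := ih (fun L => Good (q :: L)) (fun L => hG (q :: L))
        calc (if q ∈ Good [] then c q else 0) * β ^ T = c q * β ^ T := by rw [if_pos hq]
        _ ≤ c q * ∑ p : Fin T → Pat,
              (if (∀ s : Fin T, p s ∈ Good (q :: (List.ofFn p).take s.1)) then ∏ s, c (p s) else 0) :=
            mul_le_mul_right hIH _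
        _ = ∑ p : Fin T → Pat,
              (if (∀ s : Fin T, p s ∈ Good (q :: (List.ofFn p).take s.1)) then c q * ∏ s, c (p s) else 0) := by
            rw [Finset.mul_sum]
            exact Finset.sum_congr rfl fun p _ => by rw [mul_ite, mul_zero]
        _ = ∑ p : Fin T → Pat,
              (if (q ∈ Good [] ∧
                ∀ s : Fin T, p s ∈ Good (q :: (List.ofFn p).take s.1)) then c q * ∏ s, c (p s) else 0) := by
            refine Finset.sum_congr rfl fun p _ => ?_
            congr 1
            rw [eq_iff_iff]
            exact (and_iff_right hq).symm
      · rw [if_neg hq, zero_mul]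
        exact zero_le
    calc β ^ (T+1) = β * β ^ T := by rw [pow_succ]; ring
    _ ≤ (∑ q : Pat, if q ∈ Good [] then c q else 0) * β ^ T := mul_le_mul_left (hG []) _
    _ = ∑ q : Pat, (if q ∈ Good [] then c q else 0) * β ^ T := by rw [Finset.sum_mul]
    _ ≤ _ := Finset.sum_le_sum fun q _ => hinner q

open scoped Classical in
lemma pi_lower {Ω : Type*} [MeasurableSpace Ω] (μ : Measure Ω) [IsProbabilityMeasure μ]
    {Pat : Type*} [Fintype Pat] [MeasurableSpace Pat] [MeasurableSingletonClass Pat]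
    (pat : Ω → Pat) (hpat : Measurable pat) (β : ℝ≥0∞) (T : ℕ)
    (Good : List Pat → Set Pat)
    (hG : ∀ L : List Pat, β ≤ μ {h | pat h ∈ Good L}) :
    β ^ T ≤ (Measure.pi fun _ : Fin T => μ)
      {hs | ∀ t : Fin T, pat (hs t) ∈ Good ((List.ofFn fun u => pat (hs u)).take t.1)} := by
  set c : Pat → ℝ≥0∞ := fun q => μ (pat ⁻¹' {q}) with hc
  have hG' : ∀ L : List Pat, β ≤ ∑ q : Pat, if q ∈ Good L then c q else 0 := by
    intro L
    refine (hG L).trans ?_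
    have hcover : {h | pat h ∈ Good L} ⊆ ⋃ q ∈ Finset.univ.filter (fun q => q ∈ Good L), pat ⁻¹' {q} := by
      intro h hh
      refine Set.mem_biUnion (Finset.mem_filter.mpr ⟨Finset.mem_univ _, hh⟩) rfl
    refine (measure_mono hcover).trans ?_
    refine (measure_biUnion_finset_le _ _).trans ?_
    rw [Finset.sum_filter]
  set GoodSeq : (Fin T → Pat) → Prop :=
    fun p => ∀ t : Fin T, p t ∈ Good ((List.ofFn p).take t.1) with hGS
  set F : Finset (Fin T → Pat) := Finset.univ.filter GoodSeq with hF
  set R : (Fin T → Pat) → Set (Fin T → Ω) := fun p => Set.pi Set.univ (fun t => pat ⁻¹' {p t}) with hR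
  have hRmeas : ∀ p, MeasurableSet (R p) := fun p =>
    MeasurableSet.univ_pi fun t => hpat (measurableSet_singleton (p t))
  have hdisj : (↑F : Set (Fin T → Pat)).PairwiseDisjoint R := by
    intro p _ p' _ hne
    refine Set.disjoint_left.mpr fun hs hp hp' => hne (funext fun t => ?_)
    have h1 : pat (hs t) = p t := hp t (Set.mem_univ t)
    have h2 : pat (hs t) = p' t := hp' t (Set.mem_univ t)
    rw [← h1, h2]
  have hsub : (⋃ p ∈ F, R p) ⊆
      {hs | ∀ t : Fin T, pat (hs t) ∈ Good ((List.ofFn fun u => pat (hs u)).take t.1)} := by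
    intro hs hh
    rcases Set.mem_iUnion₂.mp hh with ⟨p, hpF, hhs⟩
    have hpat_eq : (fun u => pat (hs u)) = p := funext fun u => hhs u (Set.mem_univ u)
    intro t
    rw [show pat (hs t) = p t from congrFun hpat_eq t, hpat_eq]
    exact (Finset.mem_filter.mp hpF).2 t
  calc β ^ T ≤ ∑ p : Fin T → Pat,
        if GoodSeq p then ∏ t, c (p t) else 0 := sum_good c β T Good hG'
  _ = ∑ p ∈ F, ∏ t, c (p t) := by rw [hF, Finset.sum_filter]
  _ = ∑ p ∈ F, (Measure.pi fun _ : Fin T => μ) (R p) := by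
      refine Finset.sum_congr rfl fun p _ => ?_
      rw [hR]
      rw [Measure.pi_pi]
  _ = (Measure.pi fun _ : Fin T => μ) (⋃ p ∈ F, R p) :=
      (measure_biUnion_finset hdisj fun p _ => hRmeas p).symm
  _ ≤ _ := measure_mono hsub

lemma countP_ofFn {α : Type*} (f : α → Bool) :
    ∀ {n : ℕ} (p : Fin n → α),
      (List.ofFn p).countP f = (Finset.univ.filter fun t => f (p t) = true).card := by
  intro n
  induction n with
  | zero => intro p; simp
  | succ n ih =>
    intro p
    rw [List.ofFn_succ, List.countP_cons, ih (fun i => p i.succ),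
      Finset.card_filter, Finset.card_filter, Fin.sum_univ_succ]
    by_cases h : f (p 0) = true <;> simp [h, Nat.add_comm]

end BoostAux

namespace ContradictionGraph

/-- Let `γ ∈ (0,1/2)`, `β > 0`, `m ≥ 2`, and let `T` be an odd integer with
`T ≥ 2·log₂(m)/γ²`. Suppose `μ̃` is a (Borel) probability measure on `{0,1}^X` such that for
every distribution `D` realizable by `H`, `μ̃({h : L_D(h) ≤ 1/2 − γ}) ≥ β`. Then for every
dataset `S` of size `m` realizable by `H`, the probability over `h_1, …, h_T ∼ μ̃` i.i.d. that
the majority vote `MAJ(h_1,…,h_T)` is consistent with `S` is at least `β^T`. -/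
theorem boosting_majority {X : Type*} [Countable X]
    [MeasurableSpace X] [MeasurableSingletonClass X]
    (H : Set (X → Bool)) (hH : H.Nonempty)
    (γ β : ℝ) (hγ0 : 0 < γ) (hγ1 : γ < 1 / 2) (hβ : 0 < β)
    (m : ℕ) (hm : 2 ≤ m)
    (T : ℕ) (hTodd : Odd T) (hT : 2 * Real.logb 2 m / γ ^ 2 ≤ T)
    (μ : Measure (X → Bool)) (hμ : IsProbabilityMeasure μ)
    (hgood : ∀ D : Measure (X × Bool), IsProbabilityMeasure D → RealizableDist H D →
      ENNReal.ofReal β ≤ μ {h | popLoss D h ≤ ENNReal.ofReal (1 / 2 - γ)}) :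
    ∀ S : Fin m → X × Bool, Realizable H S →
      ENNReal.ofReal (β ^ T) ≤
        (Measure.pi fun _ : Fin T => μ) {hs | Consistent (Maj T hs) S} := by
  classical
  intro S hS
  obtain ⟨hstar, hstarH, hstarC⟩ := hS
  obtain ⟨k, hk0⟩ := hTodd
  have hk : T = 2 * k + 1 := by omega
  have hm0 : 0 < m := by omega
  set pat : (X → Bool) → (Fin m → Bool) := fun h i => decide (h (S i).1 ≠ (S i).2) with hpatdef
  have hpatt : ∀ (g : X → Bool) (t : Fin m), (pat g t = true) ↔ g (S t).1 ≠ (S t).2 := by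
    intro g t
    simp only [hpatdef]
    exact decide_eq_true_iff
  have hpatm : Measurable pat := by
    rw [hpatdef]
    refine measurable_pi_iff.mpr fun i => ?_
    exact (measurable_from_top (f := fun b : Bool => decide (b ≠ (S i).2))).comp
      (measurable_pi_apply ((S i).1))
  have hW : ∀ L : List (Fin m → Bool), (0:ℝ) < BoostAux.Wt γ L :=
    fun L => BoostAux.Wt_pos hγ0 hγ1 hm0 L
  -- the key per-distribution bound, coming from the learner hypothesis
  have hG : ∀ L : List (Fin m → Bool),
      ENNReal.ofReal β ≤ μ {h | pat h ∈ BoostAux.GoodSet γ L} := by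
    intro L
    set D : Measure (X × Bool) :=
      ∑ i : Fin m, (ENNReal.ofReal (BoostAux.wt γ L i / BoostAux.Wt γ L)) • Measure.dirac (S i)
      with hD
    have hDapply : ∀ E : Set (X × Bool),
        D E = ∑ i, ENNReal.ofReal (BoostAux.wt γ L i / BoostAux.Wt γ L) * (Measure.dirac (S i)) E := by
      intro E
      rw [hD, Measure.coe_finset_sum]
      simp [Measure.smul_apply, smul_eq_mul]
    have hwsum : ∑ i, ENNReal.ofReal (BoostAux.wt γ L i / BoostAux.Wt γ L) = 1 := by
      rw [← ENNReal.ofReal_sum_of_nonneg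
        (fun i _ => div_nonneg (BoostAux.wt_pos hγ0 hγ1 L i).le (hW L).le)]
      rw [← Finset.sum_div,
        show (∑ i, BoostAux.wt γ L i) = BoostAux.Wt γ L from rfl,
        div_self (ne_of_gt (hW L))]
      exact ENNReal.ofReal_one
    have hDprob : IsProbabilityMeasure D := by
      constructor
      rw [hDapply]
      simp only [measure_univ, mul_one]
      exact hwsum
    have hploss : ∀ h : X → Bool,
        popLoss D h = ENNReal.ofReal
          ((∑ i ∈ Finset.univ.filter (fun i => pat h i = true), BoostAux.wt γ L i)
            / BoostAux.Wt γ L) := by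
      intro h
      have hEm : MeasurableSet {p : X × Bool | h p.1 ≠ p.2} := (Set.to_countable _).measurableSet
      have hdir : ∀ i : Fin m,
          (Measure.dirac (S i)) {p : X × Bool | h p.1 ≠ p.2}
            = if pat h i = true then 1 else 0 := by
        intro i
        rw [Measure.dirac_apply' _ hEm]
        by_cases hi : pat h i = true
        · have hmem : (S i) ∈ {p : X × Bool | h p.1 ≠ p.2} := (hpatt h i).mp hi
          rw [if_pos hi, Set.indicator_of_mem hmem]
          rfl
        · have hmem : (S i) ∉ {p : X × Bool | h p.1 ≠ p.2} := fun c => hi ((hpatt h i).mpr c)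
          rw [if_neg hi, Set.indicator_of_notMem hmem]
      rw [popLoss, hDapply]
      calc ∑ i, ENNReal.ofReal (BoostAux.wt γ L i / BoostAux.Wt γ L) *
            (Measure.dirac (S i)) {p : X × Bool | h p.1 ≠ p.2}
          = ∑ i, if pat h i = true
              then ENNReal.ofReal (BoostAux.wt γ L i / BoostAux.Wt γ L) else 0 := by
            refine Finset.sum_congr rfl fun i _ => ?_
            rw [hdir i]
            by_cases hi : pat h i = true <;> simp [hi]
      _ = ∑ i ∈ Finset.univ.filter (fun i => pat h i = true),
            ENNReal.ofReal (BoostAux.wt γ L i / BoostAux.Wt γ L) := (Finset.sum_filter _ _).symm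
      _ = ENNReal.ofReal ((∑ i ∈ Finset.univ.filter (fun i => pat h i = true), BoostAux.wt γ L i)
            / BoostAux.Wt γ L) := by
            rw [Finset.sum_div, ENNReal.ofReal_sum_of_nonneg
              (fun i _ => div_nonneg (BoostAux.wt_pos hγ0 hγ1 L i).le (hW L).le)]
    have h0 : popLoss D hstar = 0 := by
      rw [hploss hstar]
      have hempty : Finset.univ.filter (fun i => pat hstar i = true) = ∅ := by
        refine Finset.filter_false_of_mem fun i _ => ?_
        intro hc
        exact ((hpatt hstar i).mp hc) (hstarC i)
      rw [hempty]
      simp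
    have hreal : RealizableDist H D :=
      le_antisymm ((iInf₂_le hstar hstarH).trans h0.le) zero_le
    refine (hgood D hDprob hreal).trans (measure_mono ?_)
    intro h hh
    simp only [Set.mem_setOf_eq] at hh ⊢
    rw [hploss h] at hh
    rw [ENNReal.ofReal_le_ofReal_iff (by linarith)] at hh
    rw [div_le_iff₀ (hW L)] at hh
    exact hh
  -- apply the product-measure lower bound
  have hmain := BoostAux.pi_lower μ pat hpatm (ENNReal.ofReal β) T (BoostAux.GoodSet γ) hG
  rw [ENNReal.ofReal_pow hβ.le]
  refine hmain.trans (measure_mono ?_)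
  intro hs hhs
  simp only [Set.mem_setOf_eq] at hhs ⊢
  -- deterministic boosting argument
  have hlen : (List.ofFn fun u => pat (hs u)).length = 2*k+1 := by
    rw [List.length_ofFn, hk]
  have hgoodL : ∀ (t : ℕ) (ht : t < (List.ofFn fun u => pat (hs u)).length),
      (List.ofFn fun u => pat (hs u))[t]
        ∈ BoostAux.GoodSet γ ((List.ofFn fun u => pat (hs u)).take t) := by
    intro t ht
    have ht' : t < T := by rw [List.length_ofFn] at ht; exact ht
    have h2 := hhs ⟨t, ht'⟩
    rw [List.getElem_ofFn]
    exact h2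
  have hT' : 2 * Real.logb 2 m / γ^2 ≤ ((2*k+1 : ℕ) : ℝ) := by
    rw [← hk]; exact_mod_cast hT
  have hcount := fun i => BoostAux.count_le hγ0 hγ1 hm k hT'
    (List.ofFn fun u => pat (hs u)) hlen hgoodL i
  intro i
  have hci : (Finset.univ.filter fun t => pat (hs t) i = true).card ≤ k := by
    have h3 := hcount i
    rwa [BoostAux.countP_ofFn (fun q => q i) (fun u => pat (hs u))] at h3
  show Maj T hs (S i).1 = (S i).2
  rcases hy : (S i).2 with _ | _
  · -- label is false
    have hCeq : (Finset.univ.filter fun t => hs t (S i).1 = true)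
        = (Finset.univ.filter fun t => pat (hs t) i = true) := by
      refine Finset.filter_congr fun t _ => ?_
      rw [hpatt (hs t) i, hy]
      simp
    show (decide (T < 2 * (Finset.univ.filter fun t => hs t (S i).1 = true).card) : Bool) = false
    rw [decide_eq_false_iff_not, hCeq]
    omega
  · -- label is true
    have hsplit := Finset.card_filter_add_card_filter_not
      (s := (Finset.univ : Finset (Fin T))) (p := fun t => hs t (S i).1 = true)
    have hCeq : (Finset.univ.filter fun t => ¬ (hs t (S i).1 = true))
        = (Finset.univ.filter fun t => pat (hs t) i = true) := by
      refine Finset.filter_congr fun t _ => ?_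
      rw [hpatt (hs t) i, hy]
    rw [hCeq] at hsplit
    have hcardT : (Finset.univ : Finset (Fin T)).card = T := by simp
    rw [hcardT] at hsplit
    show (decide (T < 2 * (Finset.univ.filter fun t => hs t (S i).1 = true).card) : Bool) = true
    rw [decide_eq_true_iff]
    omega


end ContradictionGraph
end

section
/- Let X be an arbitrary (possibly uncountable) set, H ⊆ {0,1}^X a nonempty concept class, and m ∈ ℕ. Define 1/χ*_m = sup_{μ ∈ Δ({0,1}^X)} inf_{ν ∈ Δ(V_m(H))} E_{h∼μ, S∼ν}[ 1[h is consistent with S] ] and 1/ω*_m = inf_{ν ∈ Δ(V_m(H))} sup_{μ ∈ Δ({0,1}^X)} E_{h∼μ, S∼ν}[ 1[h is consistent with S] ], where Δ({0,1}^X) is the set of regular Borel probability measures on {0,1}^X (product topology) and Δ(V_m(H)) is the set of finitely supported probability distributions on the H-realizable datasets of size m. Then ω*_m = χ*_m ≤ 2^m, and moreover the supremum defining 1/χ*_m is attained: there exists μ* ∈ Δ({0,1}^X) with inf_{ν} E_{h∼μ*, S∼ν}[ 1[h is consistent with S] ] = 1/χ*_m. -/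
open MeasureTheory
open scoped ENNReal
open Pointwise
open scoped Topology

namespace ContradictionGraph

/-- The hypothesis space `{0,1}^X`, considered with the product topology (product of discrete
topologies on `{0,1}`) and its Borel σ-algebra. -/
def Hyp (X : Type*) : Type _ := X → Bool

instance (X : Type*) : TopologicalSpace (Hyp X) :=
  inferInstanceAs (TopologicalSpace (X → Bool))

noncomputable instance (X : Type*) : MeasurableSpace (Hyp X) := borel (Hyp X)

instance (X : Type*) : BorelSpace (Hyp X) := ⟨rfl⟩

end ContradictionGraph

namespace ContradictionGraph

variable {X : Type*}

/-- A regular Borel probability measure on the hypothesis space `{0,1}^X`: an element of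
`Δ({0,1}^X)`. -/
def IsRegularHypMeasure (μ : Measure (Hyp X)) : Prop :=
  IsProbabilityMeasure μ ∧ μ.InnerRegular ∧ μ.OuterRegular

/-- A finitely supported probability distribution on the `H`-realizable datasets of size `m`:
an element of `Δ(V_m(H))`. -/
def IsFinsuppDataDist (H : Set (X → Bool)) (m : ℕ) (ν : Vm H m → ℝ≥0∞) : Prop :=
  (Function.support ν).Finite ∧ ∑' S, ν S = 1

/-- The payoff `E_{h∼μ, S∼ν} [ 1[h is consistent with S] ]`. -/
noncomputable def pay (H : Set (X → Bool)) (m : ℕ)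
    (μ : Measure (Hyp X)) (ν : Vm H m → ℝ≥0∞) : ℝ≥0∞ :=
  ∑' S : Vm H m, ν S * μ {h : Hyp X | Consistent h S.1}

/-! ### Auxiliary development -/

instance : T2Space (Hyp X) := inferInstanceAs (T2Space (X → Bool))
instance : CompactSpace (Hyp X) := inferInstanceAs (CompactSpace (X → Bool))
instance : TotallyDisconnectedSpace (Hyp X) :=
  inferInstanceAs (TotallyDisconnectedSpace (X → Bool))
instance : Nonempty (Hyp X) := ⟨fun _ => false⟩

section Aux

variable (H : Set (X → Bool)) (m : ℕ)

/-- The set of hypotheses consistent with a dataset. -/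
def ConsSet (S : Vm H m) : Set (Hyp X) := {h : Hyp X | Consistent h S.1}

lemma isClopen_consSet (S : Vm H m) : IsClopen (ConsSet H m S) := by
  have : ConsSet H m S = ⋂ i, (fun h : Hyp X => h (S.1 i).1) ⁻¹' {(S.1 i).2} := by
    ext h
    simp [ConsSet, Consistent, Set.mem_iInter]
  rw [this]
  exact isClopen_iInter_of_finite fun i =>
    (isClopen_discrete _).preimage (continuous_apply (A := fun _ : X => Bool) (S.1 i).1)

lemma measurableSet_consSet (S : Vm H m) : MeasurableSet (ConsSet H m S) :=
  (isClopen_consSet H m S).2.measurableSet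

lemma pay_eq (μ : Measure (Hyp X)) (ν : Vm H m → ℝ≥0∞) :
    pay H m μ ν = ∑' S : Vm H m, ν S * μ (ConsSet H m S) := rfl

/-- The payoff of a Dirac measure, as a function of the hypothesis. -/
noncomputable def fpay (ν : Vm H m → ℝ≥0∞) (h : Hyp X) : ℝ≥0∞ :=
  ∑' S : Vm H m, ν S * (ConsSet H m S).indicator 1 h

lemma isRegularHypMeasure_dirac (h : Hyp X) : IsRegularHypMeasure (Measure.dirac h) := by
  refine ⟨inferInstance, ⟨?_⟩, ⟨?_⟩⟩
  · intro A hA r hr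
    by_cases hmem : h ∈ A
    · refine ⟨{h}, Set.singleton_subset_iff.2 hmem, isCompact_singleton, ?_⟩
      have h1 : Measure.dirac h ({h} : Set (Hyp X)) = 1 := by
        rw [Measure.dirac_apply' _ (isClosed_singleton.measurableSet)]
        simp
      have h2 : Measure.dirac h A ≤ 1 := prob_le_one
      rw [h1]; exact lt_of_lt_of_le hr h2
    · have : Measure.dirac h A = 0 := by
        rw [Measure.dirac_apply' _ hA, Set.indicator_of_notMem hmem]
      rw [this] at hr
      exact absurd hr (by simp)
  · intro A hA r hr
    by_cases hmem : h ∈ A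
    · refine ⟨Set.univ, Set.subset_univ _, isOpen_univ, ?_⟩
      have h1 : Measure.dirac h (Set.univ : Set (Hyp X)) = 1 := by simp
      have h2 : Measure.dirac h A = 1 := by
        rw [Measure.dirac_apply' _ hA, Set.indicator_of_mem hmem]; rfl
      rw [h1, ← h2]; exact hr
    · refine ⟨{h}ᶜ, Set.subset_compl_singleton_iff.2 hmem, isClosed_singleton.isOpen_compl, ?_⟩
      have h1 : Measure.dirac h ({h}ᶜ : Set (Hyp X)) = 0 := by
        rw [Measure.dirac_apply' _ isClosed_singleton.measurableSet.compl,
          Set.indicator_of_notMem (by simp)]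
      have h2 : Measure.dirac h A = 0 := by
        rw [Measure.dirac_apply' _ hA, Set.indicator_of_notMem hmem]
      rw [h1, ← h2]; exact hr

variable {H m}

lemma tsum_support_eq {ν : Vm H m → ℝ≥0∞} (hν : IsFinsuppDataDist H m ν)
    (g : Vm H m → ℝ≥0∞) (hg : ∀ S, ν S = 0 → g S = 0) :
    ∑' S : Vm H m, g S = ∑ S ∈ hν.1.toFinset, g S := by
  refine tsum_eq_sum fun S hS => ?_
  apply hg
  by_contra hne
  exact hS (hν.1.mem_toFinset.2 hne)

lemma sum_support_ν {ν : Vm H m → ℝ≥0∞} (hν : IsFinsuppDataDist H m ν) :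
    ∑ S ∈ hν.1.toFinset, ν S = 1 := by
  rw [← tsum_support_eq hν ν (fun _ h => h)]
  exact hν.2

lemma pay_dirac (h : Hyp X) (ν : Vm H m → ℝ≥0∞) :
    pay H m (Measure.dirac h) ν = fpay H m ν h := by
  refine tsum_congr fun S => ?_
  rw [show ({h' : Hyp X | Consistent h' S.1} : Set (Hyp X)) = ConsSet H m S from rfl,
    Measure.dirac_apply' _ (measurableSet_consSet H m S)]

lemma fpay_le_one {ν : Vm H m → ℝ≥0∞} (hν : IsFinsuppDataDist H m ν) (h : Hyp X) :
    fpay H m ν h ≤ 1 := by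
  calc fpay H m ν h ≤ ∑' S : Vm H m, ν S := by
        refine ENNReal.tsum_le_tsum fun S => ?_
        by_cases hc : h ∈ ConsSet H m S
        · rw [Set.indicator_of_mem hc]; simp
        · rw [Set.indicator_of_notMem hc]; simp
    _ = 1 := hν.2

lemma pay_le_iSup_fpay {μ : Measure (Hyp X)} (hμ : IsProbabilityMeasure μ)
    {ν : Vm H m → ℝ≥0∞} (hν : IsFinsuppDataDist H m ν) :
    pay H m μ ν ≤ ⨆ h : Hyp X, fpay H m ν h := by
  have hmeas : ∀ S : Vm H m, Measurable ((ConsSet H m S).indicator (1 : Hyp X → ℝ≥0∞)) :=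
    fun S => measurable_one.indicator (measurableSet_consSet H m S)
  have key : pay H m μ ν = ∫⁻ h, ∑ S ∈ hν.1.toFinset, ν S * (ConsSet H m S).indicator 1 h ∂μ := by
    rw [pay_eq, tsum_support_eq hν _ (by intro S h; rw [h, zero_mul])]
    rw [lintegral_finset_sum _ fun S _ => (hmeas S).const_mul (ν S)]
    refine Finset.sum_congr rfl fun S _ => ?_
    rw [lintegral_const_mul _ (hmeas S), lintegral_indicator_one (measurableSet_consSet H m S)]
  rw [key]
  calc ∫⁻ h, ∑ S ∈ hν.1.toFinset, ν S * (ConsSet H m S).indicator 1 h ∂μ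
      ≤ ∫⁻ _, ⨆ h' : Hyp X, fpay H m ν h' ∂μ := by
        refine lintegral_mono fun h => ?_
        have : ∑ S ∈ hν.1.toFinset, ν S * (ConsSet H m S).indicator 1 h = fpay H m ν h :=
          (tsum_support_eq hν _ (by intro S hs; rw [hs, zero_mul])).symm
        rw [this]
        exact le_iSup (fun h' => fpay H m ν h') h
    _ = ⨆ h' : Hyp X, fpay H m ν h' := by
        rw [lintegral_const, measure_univ, mul_one]

/-- Statement `17`, step 1: for a fixed finitely supported `ν`, the sup over regular measures
of the payoff is the sup over hypotheses. -/
lemma iSup_pay_eq {ν : Vm H m → ℝ≥0∞} (hν : IsFinsuppDataDist H m ν) :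
    (⨆ (μ : Measure (Hyp X)) (_ : IsRegularHypMeasure μ), pay H m μ ν) =
      ⨆ h : Hyp X, fpay H m ν h := by
  apply le_antisymm
  · exact iSup₂_le fun μ hμ => pay_le_iSup_fpay hμ.1 hν
  · refine iSup_le fun h => ?_
    have := le_iSup₂ (f := fun (μ : Measure (Hyp X)) (_ : IsRegularHypMeasure μ) => pay H m μ ν)
      (Measure.dirac h) (isRegularHypMeasure_dirac h)
    rwa [pay_dirac h ν] at this

end Aux

section StageB

variable {X : Type*} {H : Set (X → Bool)} {m : ℕ}

open Classical in
lemma two_pow_sub_le_count (T : Finset X) (S : Vm H m)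
    (hpts : ∀ i, (S.1 i).1 ∈ T) :
    (2 : ℝ≥0∞) ^ (T.card - m) ≤
      ∑ g : ({x // x ∈ T} → Bool),
        (ConsSet H m S).indicator 1
          (fun x => if hx : x ∈ T then g ⟨x, hx⟩ else false : Hyp X) := by
  classical
  have hsum : ∑ g : ({x // x ∈ T} → Bool),
      (ConsSet H m S).indicator (1 : Hyp X → ℝ≥0∞)
        (fun x => if hx : x ∈ T then g ⟨x, hx⟩ else false : Hyp X)
      = ((Finset.univ.filter
          (fun g : ({x // x ∈ T} → Bool) =>
            (fun x => if hx : x ∈ T then g ⟨x, hx⟩ else false : Hyp X) ∈ ConsSet H m S)).card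
          : ℝ≥0∞) := by
    rw [← Finset.sum_boole]
    refine Finset.sum_congr rfl fun g _ => ?_
    by_cases hg : (fun x => if hx : x ∈ T then g ⟨x, hx⟩ else false : Hyp X) ∈ ConsSet H m S
    · rw [if_pos hg]; exact Set.indicator_of_mem hg _
    · rw [if_neg hg]; exact Set.indicator_of_notMem hg _
  rw [hsum]
  -- now a cardinality bound in ℕ
  have hcard : 2 ^ (T.card - m) ≤ (Finset.univ.filter
      (fun g : ({x // x ∈ T} → Bool) =>
        (fun x => if hx : x ∈ T then g ⟨x, hx⟩ else false : Hyp X) ∈ ConsSet H m S)).card := by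
    rw [← Fintype.card_subtype]
    obtain ⟨h₀, -, h₀cons⟩ := S.2
    set ptsS : Finset X := Finset.image (fun i => (S.1 i).1) Finset.univ with hptsS
    have hψ : ∀ u : {x // x ∈ T \ ptsS} → Bool,
        (fun x => if hx : x ∈ T then
            (if hp : (x : X) ∈ ptsS then h₀ x
              else u ⟨x, Finset.mem_sdiff.2 ⟨hx, hp⟩⟩) else false : Hyp X) ∈ ConsSet H m S := by
      intro u i
      have hxp : (S.1 i).1 ∈ ptsS := Finset.mem_image.2 ⟨i, Finset.mem_univ i, rfl⟩
      have hxT : (S.1 i).1 ∈ T := hpts i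
      show (if hx : (S.1 i).1 ∈ T then
          (if hp : (S.1 i).1 ∈ ptsS then h₀ (S.1 i).1
            else u ⟨(S.1 i).1, Finset.mem_sdiff.2 ⟨hx, hp⟩⟩) else false) = (S.1 i).2
      rw [dif_pos hxT, dif_pos hxp]
      exact h₀cons i
    have hinj : Function.Injective
        (fun u : {x // x ∈ T \ ptsS} → Bool =>
          (⟨fun t : {x // x ∈ T} => if hp : (t : X) ∈ ptsS then h₀ t
              else u ⟨t, Finset.mem_sdiff.2 ⟨t.2, hp⟩⟩, hψ u⟩ :
            {g : {x // x ∈ T} → Bool //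
              (fun x => if hx : x ∈ T then g ⟨x, hx⟩ else false : Hyp X) ∈ ConsSet H m S})) := by
      intro u u' huu
      funext t
      obtain ⟨x, hx⟩ := t
      have hxT : x ∈ T := (Finset.mem_sdiff.1 hx).1
      have hxp : x ∉ ptsS := (Finset.mem_sdiff.1 hx).2
      have := congrFun (congrArg Subtype.val huu) ⟨x, hxT⟩
      simpa [dif_neg hxp] using this
    have hle := Fintype.card_le_of_injective _ hinj
    have hdom : Fintype.card ({x // x ∈ T \ ptsS} → Bool) = 2 ^ (T \ ptsS).card := by
      rw [Fintype.card_fun, Fintype.card_bool, Fintype.card_coe]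
    have hsub : ptsS ⊆ T := by
      intro x hx
      obtain ⟨i, -, rfl⟩ := Finset.mem_image.1 hx
      exact hpts i
    have hcard2 : T.card - m ≤ (T \ ptsS).card := by
      rw [Finset.card_sdiff_of_subset hsub]
      have hm : ptsS.card ≤ m := le_trans (Finset.card_image_le) (by simp)
      exact Nat.sub_le_sub_left hm T.card
    calc 2 ^ (T.card - m) ≤ 2 ^ (T \ ptsS).card := Nat.pow_le_pow_right (by norm_num) hcard2
      _ = Fintype.card ({x // x ∈ T \ ptsS} → Bool) := hdom.symm
      _ ≤ _ := hle
  calc (2 : ℝ≥0∞) ^ (T.card - m) = ((2 ^ (T.card - m) : ℕ) : ℝ≥0∞) := by push_cast; ring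
    _ ≤ _ := by exact_mod_cast Nat.cast_le.2 hcard

lemma two_pow_inv_le_iSup_fpay {ν : Vm H m → ℝ≥0∞} (hν : IsFinsuppDataDist H m ν) :
    ((2 : ℝ≥0∞) ^ m)⁻¹ ≤ ⨆ h : Hyp X, fpay H m ν h := by
  classical
  set suppF := hν.1.toFinset with hsuppF
  set T : Finset X := suppF.biUnion (fun S => Finset.image (fun i => (S.1 i).1) Finset.univ)
    with hT
  set tc := T.card with htc
  set ext : ({x // x ∈ T} → Bool) → Hyp X :=
    fun g => (fun x => if hx : x ∈ T then g ⟨x, hx⟩ else false) with hext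
  set A := ∑ g : ({x // x ∈ T} → Bool), fpay H m ν (ext g) with hA
  have h1 : (2 : ℝ≥0∞) ^ (tc - m) ≤ A := by
    have hAeq : A = ∑ S ∈ suppF, ν S *
        (∑ g : ({x // x ∈ T} → Bool), (ConsSet H m S).indicator 1 (ext g)) := by
      rw [hA]
      have : ∀ g : ({x // x ∈ T} → Bool), fpay H m ν (ext g)
          = ∑ S ∈ suppF, ν S * (ConsSet H m S).indicator 1 (ext g) := fun g =>
        tsum_support_eq hν _ (by intro S hS; rw [hS, zero_mul])
      rw [Finset.sum_congr rfl fun g _ => this g, Finset.sum_comm]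
      exact Finset.sum_congr rfl fun S _ => by rw [Finset.mul_sum]
    rw [hAeq]
    calc (2 : ℝ≥0∞) ^ (tc - m) = (∑ S ∈ suppF, ν S) * (2 : ℝ≥0∞) ^ (tc - m) := by
          rw [sum_support_ν hν, one_mul]
      _ = ∑ S ∈ suppF, ν S * (2 : ℝ≥0∞) ^ (tc - m) := Finset.sum_mul _ _ _
      _ ≤ _ := by
          refine Finset.sum_le_sum fun S hS => ?_
          refine mul_le_mul_right ?_ _
          refine two_pow_sub_le_count T S fun i => ?_
          exact Finset.mem_biUnion.2 ⟨S, hS, Finset.mem_image.2 ⟨i, Finset.mem_univ i, rfl⟩⟩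
  have h2 : A ≤ (2 : ℝ≥0∞) ^ tc * ⨆ h : Hyp X, fpay H m ν h := by
    calc A ≤ ∑ _g : ({x // x ∈ T} → Bool), ⨆ h : Hyp X, fpay H m ν h :=
          Finset.sum_le_sum fun g _ => le_iSup (fun h => fpay H m ν h) (ext g)
      _ = (Fintype.card ({x // x ∈ T} → Bool) : ℝ≥0∞) * ⨆ h : Hyp X, fpay H m ν h := by
          rw [Finset.sum_const, Finset.card_univ, nsmul_eq_mul]
      _ = (2 : ℝ≥0∞) ^ tc * ⨆ h : Hyp X, fpay H m ν h := by
          rw [Fintype.card_fun, Fintype.card_bool, Fintype.card_coe]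
          push_cast
          ring_nf
          rfl
  have h3 : (2 : ℝ≥0∞) ^ tc ≤ 2 ^ m * 2 ^ (tc - m) := by
    rw [← pow_add]
    exact pow_le_pow_right' (by norm_num) (by omega)
  have h4 : (2 : ℝ≥0∞) ^ tc * 1 ≤ (2 : ℝ≥0∞) ^ tc * (2 ^ m * ⨆ h : Hyp X, fpay H m ν h) := by
    rw [mul_one]
    calc (2 : ℝ≥0∞) ^ tc ≤ 2 ^ m * 2 ^ (tc - m) := h3
      _ ≤ 2 ^ m * ((2 : ℝ≥0∞) ^ tc * ⨆ h : Hyp X, fpay H m ν h) :=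
          mul_le_mul_right (le_trans h1 h2) _
      _ = (2 : ℝ≥0∞) ^ tc * (2 ^ m * ⨆ h : Hyp X, fpay H m ν h) := by ring
  have h5 : (1 : ℝ≥0∞) ≤ 2 ^ m * ⨆ h : Hyp X, fpay H m ν h :=
    (ENNReal.mul_le_mul_iff_right (by positivity) (by simp [ENNReal.pow_ne_top])).1 h4
  calc ((2 : ℝ≥0∞) ^ m)⁻¹ = ((2 : ℝ≥0∞) ^ m)⁻¹ * 1 := (mul_one _).symm
    _ ≤ ((2 : ℝ≥0∞) ^ m)⁻¹ * (2 ^ m * ⨆ h : Hyp X, fpay H m ν h) := mul_le_mul_right h5 _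
    _ = (((2 : ℝ≥0∞) ^ m)⁻¹ * 2 ^ m) * ⨆ h : Hyp X, fpay H m ν h := by ring
    _ = ⨆ h : Hyp X, fpay H m ν h := by
        rw [ENNReal.inv_mul_cancel (by positivity) (by simp [ENNReal.pow_ne_top]), one_mul]

end StageB

section StageC

variable {X : Type*} {H : Set (X → Bool)} {m : ℕ}

variable (H m) in
/-- The value `1/χ*_m` of the game: `inf_ν sup_h`. -/
noncomputable def gameVal : ℝ≥0∞ :=
  ⨅ (ν : Vm H m → ℝ≥0∞) (_ : IsFinsuppDataDist H m ν), ⨆ h : Hyp X, fpay H m ν h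

open Classical in
lemma isFinsuppDataDist_dirac (S₀ : Vm H m) :
    IsFinsuppDataDist H m (fun S => if S = S₀ then 1 else 0) := by
  constructor
  · apply Set.Finite.subset (Set.finite_singleton S₀)
    intro S hS
    simp only [Function.mem_support, ne_eq, ite_eq_right_iff, not_forall] at hS
    exact hS.1
  · exact tsum_ite_eq S₀ 1

lemma gameVal_le_one (hne : Nonempty (Vm H m)) : gameVal H m ≤ 1 := by
  obtain ⟨S₀⟩ := hne
  refine le_trans (iInf₂_le _ (isFinsuppDataDist_dirac S₀)) ?_
  exact iSup_le fun h => fpay_le_one (isFinsuppDataDist_dirac S₀) h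

set_option maxHeartbeats 1000000 in
open Classical in
lemma exists_finite_optimal (hV1 : gameVal H m ≤ 1) (F : Finset (Vm H m)) :
    ∃ μF : Measure (Hyp X), IsProbabilityMeasure μF ∧
      ∀ S ∈ F, gameVal H m ≤ μF (ConsSet H m S) := by
  classical
  -- the finite pattern set
  set pat : Hyp X → ({S // S ∈ F} → ℝ) :=
    fun h S => if h ∈ ConsSet H m S.1 then 1 else 0 with hpat
  have hpat0 : ∀ h S, 0 ≤ pat h S := by
    intro h S
    by_cases hc : h ∈ ConsSet H m S.1 <;> simp [hpat, hc]
  have hPsub : Set.range pat ⊆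
      Set.range (fun b : {S // S ∈ F} → Bool => fun S => if b S then (1 : ℝ) else 0) := by
    rintro _ ⟨h, rfl⟩
    refine ⟨fun S => if h ∈ ConsSet H m S.1 then true else false, ?_⟩
    funext S
    by_cases hc : h ∈ ConsSet H m S.1 <;> simp [hpat, hc]
  have Pfin : (Set.range pat).Finite := (Set.finite_range _).subset hPsub
  set PF : Finset ({S // S ∈ F} → ℝ) := Pfin.toFinset with hPF
  have hmemPF : ∀ h : Hyp X, pat h ∈ PF := fun h =>
    Pfin.mem_toFinset.2 (Set.mem_range_self h)
  have hPFne : PF.Nonempty := ⟨pat (fun _ => false), hmemPF _⟩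
  set r : ℝ := (gameVal H m).toReal with hr
  -- Step 1: the game value lower-bounds the best response to any mixed dataset strategy
  have C1 : ∀ q : {S // S ∈ F} → ℝ, (∀ S, 0 ≤ q S) → ∑ S, q S = 1 →
      r ≤ PF.sup' hPFne (fun p => ∑ S, p S * q S) := by
    intro q hq0 hq1
    set ν : Vm H m → ℝ≥0∞ :=
      fun S => if hS : S ∈ F then ENNReal.ofReal (q ⟨S, hS⟩) else 0 with hνdef
    have hνoff : ∀ S : Vm H m, S ∉ F → ν S = 0 := fun S hS => dif_neg hS
    have hνfin : (Function.support ν).Finite := by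
      apply F.finite_toSet.subset
      intro S hS
      by_contra hSF
      exact (Function.mem_support.1 hS) (hνoff S hSF)
    have htsum : ∑' S, ν S = 1 := by
      rw [tsum_eq_sum (fun S hS => hνoff S hS), ← Finset.sum_coe_sort F ν]
      have : ∀ S : {S // S ∈ F}, ν S.1 = ENNReal.ofReal (q S) := by
        intro S; rw [hνdef]; exact dif_pos S.2
      rw [Finset.sum_congr rfl fun S _ => this S,
        ← ENNReal.ofReal_sum_of_nonneg (fun S _ => hq0 S), hq1, ENNReal.ofReal_one]
    have hdist : IsFinsuppDataDist H m ν := ⟨hνfin, htsum⟩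
    have hsup0 : (0 : ℝ) ≤ PF.sup' hPFne (fun p => ∑ S, p S * q S) := by
      refine le_trans ?_ (Finset.le_sup' (fun p => ∑ S, p S * q S) (hmemPF (fun _ => false)))
      exact Finset.sum_nonneg fun S _ => mul_nonneg (hpat0 _ S) (hq0 S)
    have hbound : ∀ h : Hyp X, fpay H m ν h ≤
        ENNReal.ofReal (PF.sup' hPFne (fun p => ∑ S, p S * q S)) := by
      intro h
      have h1 : fpay H m ν h = ∑ S ∈ F, ν S * (ConsSet H m S).indicator 1 h :=
        tsum_eq_sum (fun S hS => by rw [hνoff S hS, zero_mul])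
      have h2 : ∀ S : {S // S ∈ F},
          ν S.1 * (ConsSet H m S.1).indicator 1 h = ENNReal.ofReal (q S * pat h S) := by
        intro S
        have hν : ν S.1 = ENNReal.ofReal (q S) := dif_pos S.2
        by_cases hc : h ∈ ConsSet H m S.1
        · rw [Set.indicator_of_mem hc, hν, Pi.one_apply, mul_one, hpat]
          simp [hc]
        · rw [Set.indicator_of_notMem hc, hν, mul_zero, hpat]
          simp [hc]
      rw [h1, ← Finset.sum_coe_sort F, Finset.sum_congr rfl fun S _ => h2 S,
        ← ENNReal.ofReal_sum_of_nonneg (fun S _ => mul_nonneg (hq0 S) (hpat0 h S))]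
      apply ENNReal.ofReal_le_ofReal
      calc ∑ S, q S * pat h S = ∑ S, pat h S * q S := by
            exact Finset.sum_congr rfl fun S _ => mul_comm _ _
        _ ≤ _ := Finset.le_sup' (fun p => ∑ S, p S * q S) (hmemPF h)
    have hle : gameVal H m ≤ ENNReal.ofReal (PF.sup' hPFne (fun p => ∑ S, p S * q S)) := by
      refine le_trans (iInf₂_le ν hdist) (iSup_le hbound)
    calc r ≤ (ENNReal.ofReal (PF.sup' hPFne (fun p => ∑ S, p S * q S))).toReal :=
          ENNReal.toReal_mono ENNReal.ofReal_ne_top hle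
      _ = _ := ENNReal.toReal_ofReal hsup0
  -- Step 2: separation gives a good element of the convex hull of patterns
  set Cset : Set ({S // S ∈ F} → ℝ) :=
    {y | ∃ z ∈ convexHull ℝ (PF : Set ({S // S ∈ F} → ℝ)), y ≤ z} with hCset
  have hCconv : Convex ℝ Cset := by
    rintro y₁ ⟨z₁, hz₁, hyz₁⟩ y₂ ⟨z₂, hz₂, hyz₂⟩ a b ha hb hab
    refine ⟨a • z₁ + b • z₂, (convex_convexHull ℝ _) hz₁ hz₂ ha hb hab, ?_⟩
    intro S
    simp only [Pi.add_apply, Pi.smul_apply, smul_eq_mul]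
    exact add_le_add (mul_le_mul_of_nonneg_left (hyz₁ S) ha)
      (mul_le_mul_of_nonneg_left (hyz₂ S) hb)
  have hCclosed : IsClosed Cset := by
    have hceq : Cset = convexHull ℝ (PF : Set ({S // S ∈ F} → ℝ)) +
        {w : {S // S ∈ F} → ℝ | w ≤ 0} := by
      ext y
      constructor
      · rintro ⟨z, hz, hyz⟩
        exact ⟨z, hz, y - z, fun S => by simpa using hyz S, by funext S; simp⟩
      · rintro ⟨z, hz, w, hw, rfl⟩
        exact ⟨z, hz, fun S => by have h0 := hw S; simp only [Pi.zero_apply] at h0; simp only [Pi.add_apply]; linarith⟩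
    rw [hceq]
    refine IsClosed.add_left_of_isCompact ?_ ((PF.finite_toSet).isCompact_convexHull ℝ)
    have : {w : {S // S ∈ F} → ℝ | w ≤ 0} = ⋂ S, {w : {S // S ∈ F} → ℝ | w S ≤ 0} := by
      ext w; simp [Pi.le_def]
    rw [this]
    exact isClosed_iInter fun S => isClosed_le (continuous_apply S) continuous_const
  have hrC : (fun _ => r : {S // S ∈ F} → ℝ) ∈ Cset := by
    by_contra hrCn
    obtain ⟨f, u, hfu, hur⟩ := geometric_hahn_banach_closed_point hCconv hCclosed hrCn
    set q : {S // S ∈ F} → ℝ := fun S => f ((Pi.single S 1 : {S // S ∈ F} → ℝ)) with hqdef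
    have decomp : ∀ y : {S // S ∈ F} → ℝ, f y = ∑ S, y S * q S := by
      intro y
      have hy : y = ∑ S, y S • (Pi.single S 1 : {S // S ∈ F} → ℝ) := by
        funext j
        rw [Finset.sum_apply]
        simp [Pi.single_apply]
      conv_lhs => rw [hy]
      rw [map_sum]
      exact Finset.sum_congr rfl fun S _ => by rw [_root_.map_smul, smul_eq_mul]
    set p₀ : {S // S ∈ F} → ℝ := pat (fun _ => false) with hp₀def
    have hp₀PF : p₀ ∈ PF := hmemPF _
    have hconvmem : ∀ p ∈ PF, p ∈ convexHull ℝ (PF : Set ({S // S ∈ F} → ℝ)) :=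
      fun p hp => subset_convexHull ℝ _ (Finset.mem_coe.2 hp)
    have hp₀C : p₀ ∈ Cset := ⟨p₀, hconvmem _ hp₀PF, le_rfl⟩
    have hq0 : ∀ S, 0 ≤ q S := by
      intro S
      by_contra hneg
      push_neg at hneg
      have hqpos : 0 < -q S := by linarith
      set t : ℝ := (u - f p₀ + 1) / (-q S) with htdef
      have hfp₀ : f p₀ < u := hfu p₀ hp₀C
      have ht0 : 0 ≤ t := div_nonneg (by linarith) hqpos.le
      have hyC : p₀ - t • (Pi.single S 1 : {S // S ∈ F} → ℝ) ∈ Cset := by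
        refine ⟨p₀, hconvmem _ hp₀PF, ?_⟩
        intro j
        have : (0 : ℝ) ≤ t * (Pi.single S 1 : {S // S ∈ F} → ℝ) j := by
          refine mul_nonneg ht0 ?_
          by_cases hj : S = j <;> simp [Pi.single_apply, hj]
        simpa using sub_le_self (p₀ j) this
      have hlt := hfu _ hyC
      rw [map_sub, _root_.map_smul, smul_eq_mul] at hlt
      have hcancel : t * (-q S) = u - f p₀ + 1 := by
        rw [htdef, div_mul_cancel₀]
        exact hqpos.ne'
      have : f p₀ - t * q S = u + 1 := by
        have : t * q S = -(t * (-q S)) := by ring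
        rw [this, hcancel]; ring
      rw [this] at hlt
      linarith
    have hfp : ∀ p ∈ PF, ∑ S, p S * q S < u := by
      intro p hp
      have := hfu p ⟨p, hconvmem _ hp, le_rfl⟩
      rwa [decomp] at this
    set Q : ℝ := ∑ S, q S with hQdef
    have hru : u < r * Q := by
      have : f (fun _ => r) = r * Q := by
        rw [decomp, hQdef, Finset.mul_sum]
      rwa [this] at hur
    by_cases hQ0 : Q ≤ 0
    · have hQeq : Q = 0 := le_antisymm hQ0 (Finset.sum_nonneg fun S _ => hq0 S)
      have hzero : ∀ S ∈ Finset.univ, q S = 0 :=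
        (Finset.sum_eq_zero_iff_of_nonneg (fun S _ => hq0 S)).1 hQeq
      have h0u : (0 : ℝ) < u := by
        have := hfp p₀ hp₀PF
        have heq : ∑ S, p₀ S * q S = 0 :=
          Finset.sum_eq_zero fun S hS => by rw [hzero S hS, mul_zero]
        linarith [heq ▸ this]
      rw [hQeq, mul_zero] at hru
      linarith
    · push_neg at hQ0
      set q' : {S // S ∈ F} → ℝ := fun S => q S / Q with hq'def
      have hq'0 : ∀ S, 0 ≤ q' S := fun S => div_nonneg (hq0 S) hQ0.le
      have hq'1 : ∑ S, q' S = 1 := by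
        rw [hq'def, ← Finset.sum_div, ← hQdef, div_self hQ0.ne']
      have hC1 := C1 q' hq'0 hq'1
      have hltu : PF.sup' hPFne (fun p => ∑ S, p S * q' S) < u / Q := by
        rw [Finset.sup'_lt_iff]
        intro p hp
        have : ∑ S, p S * q' S = (∑ S, p S * q S) / Q := by
          rw [Finset.sum_div]
          refine Finset.sum_congr rfl fun S _ => ?_
          show p S * (q S / Q) = p S * q S / Q
          rw [mul_div_assoc]
        rw [this]
        exact (div_lt_div_iff_of_pos_right hQ0).2 (hfp p hp)
      have huQ : u / Q < r := (div_lt_iff₀ hQ0).2 (by linarith)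
      linarith [lt_of_le_of_lt hC1 hltu]
  obtain ⟨z, hzconv, hrz⟩ := hrC
  -- Step 3: build the optimal finitely supported measure
  rw [Finset.convexHull_eq] at hzconv
  obtain ⟨w, hw0, hw1, hwz⟩ := hzconv
  have hz_eq : ∀ S : {S // S ∈ F}, z S = ∑ p ∈ PF, w p * p S := by
    intro S
    rw [← hwz, Finset.centerMass_eq_of_sum_1 _ id hw1, Finset.sum_apply]
    exact Finset.sum_congr rfl fun p _ => by simp
  have hrep : ∀ p : {S // S ∈ F} → ℝ, ∃ h : Hyp X, p ∈ PF → pat h = p := by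
    intro p
    by_cases hp : p ∈ PF
    · obtain ⟨h, hh⟩ := Pfin.mem_toFinset.1 hp
      exact ⟨h, fun _ => hh⟩
    · exact ⟨fun _ => false, fun hc => absurd hc hp⟩
  set rep : ({S // S ∈ F} → ℝ) → Hyp X := fun p => (hrep p).choose with hrepdef
  have hrep_spec : ∀ p ∈ PF, pat (rep p) = p := fun p hp => (hrep p).choose_spec hp
  set μF : Measure (Hyp X) :=
    ∑ p ∈ PF, ENNReal.ofReal (w p) • Measure.dirac (rep p) with hμFdef
  have happ : ∀ A : Set (Hyp X), MeasurableSet A →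
      μF A = ∑ p ∈ PF, ENNReal.ofReal (w p) * Measure.dirac (rep p) A := by
    intro A _
    rw [hμFdef, Measure.finset_sum_apply]
    exact Finset.sum_congr rfl fun p _ => by rw [Measure.smul_apply, smul_eq_mul]
  have hsum_ofReal : ∑ p ∈ PF, ENNReal.ofReal (w p) = 1 := by
    rw [← ENNReal.ofReal_sum_of_nonneg (fun p hp => hw0 p hp), hw1, ENNReal.ofReal_one]
  have hprob : IsProbabilityMeasure μF := by
    constructor
    rw [happ Set.univ MeasurableSet.univ]
    simp only [measure_univ, mul_one]
    exact hsum_ofReal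
  refine ⟨μF, hprob, fun S hS => ?_⟩
  have hμFS : μF (ConsSet H m S) = ENNReal.ofReal (z ⟨S, hS⟩) := by
    rw [happ _ (measurableSet_consSet H m S), hz_eq ⟨S, hS⟩,
      ENNReal.ofReal_sum_of_nonneg (fun p hp => mul_nonneg (hw0 p hp) ?_)]
    · refine Finset.sum_congr rfl fun p hp => ?_
      have hps : p ⟨S, hS⟩ = pat (rep p) ⟨S, hS⟩ := by rw [hrep_spec p hp]
      have hind : (ConsSet H m S).indicator (1 : Hyp X → ℝ≥0∞) (rep p)
          = ENNReal.ofReal (p ⟨S, hS⟩) := by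
        by_cases hc : rep p ∈ ConsSet H m S
        · rw [Set.indicator_of_mem hc, Pi.one_apply, hps, hpat]
          simp [hc]
        · rw [Set.indicator_of_notMem hc, hps, hpat]
          simp [hc]
      rw [Measure.dirac_apply' _ (measurableSet_consSet H m S), hind,
        ← ENNReal.ofReal_mul (hw0 p hp)]
    · rw [← hrep_spec p hp]
      exact hpat0 _ _
  rw [hμFS]
  calc gameVal H m = ENNReal.ofReal r := by
        rw [hr, ENNReal.ofReal_toReal (by
          intro hcon
          rw [hcon] at hV1
          exact absurd hV1 (by simp))]
    _ ≤ ENNReal.ofReal (z ⟨S, hS⟩) := ENNReal.ofReal_le_ofReal (hrz ⟨S, hS⟩)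

end StageC

section StageD

variable {X : Type*}

lemma exists_clopen_separating {K₁ K₂ : Set (Hyp X)} (h₁ : IsCompact K₁) (h₂ : IsCompact K₂)
    (hd : Disjoint K₁ K₂) : ∃ U : Set (Hyp X), IsClopen U ∧ K₁ ⊆ U ∧ Disjoint U K₂ := by
  classical
  have hW : IsOpen K₂ᶜ := h₂.isClosed.isOpen_compl
  have hV : ∀ x : K₁, ∃ V : Set (Hyp X), IsClopen V ∧ (x : Hyp X) ∈ V ∧ V ⊆ K₂ᶜ :=
    fun x => compact_exists_isClopen_in_isOpen hW (Set.disjoint_left.1 hd x.2)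
  choose V hVclopen hVmem hVsub using hV
  obtain ⟨t, ht⟩ := h₁.elim_finite_subcover V (fun x => (hVclopen x).2)
    (fun x hx => Set.mem_iUnion.2 ⟨⟨x, hx⟩, hVmem ⟨x, hx⟩⟩)
  refine ⟨⋃ x ∈ t, V x, isClopen_biUnion_finset (fun x _ => hVclopen x), ht, ?_⟩
  rw [Set.disjoint_left]
  intro a ha haK₂
  obtain ⟨x, -, hx⟩ := Set.mem_iUnion₂.1 ha
  exact (hVsub x hx) haK₂

lemma exists_limit_measure {ι : Type*} [SemilatticeSup ι] [Nonempty ι]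
    (μs : ι → Measure (Hyp X)) (hprob : ∀ i, IsProbabilityMeasure (μs i)) :
    ∃ μ : Measure (Hyp X), IsRegularHypMeasure μ ∧
      ∀ C : Set (Hyp X), IsClopen C → ∀ c : ℝ≥0∞,
        (∀ᶠ i in Filter.atTop, c ≤ μs i C) → c ≤ μ C := by
  classical
  set 𝒰 : Ultrafilter ι := Ultrafilter.of Filter.atTop with h𝒰
  have hex : ∀ g : ι → ℝ≥0∞, ∃ x, Filter.Tendsto g 𝒰 (𝓝 x) := by
    intro g
    obtain ⟨x, -, hx⟩ := isCompact_univ.ultrafilter_le_nhds (𝒰.map g) (by simp)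
    exact ⟨x, hx⟩
  set ℓ : Set (Hyp X) → ℝ≥0∞ := fun C => (𝒰 : Filter ι).limUnder (fun i => μs i C) with hℓ
  have hten : ∀ C : Set (Hyp X), Filter.Tendsto (fun i => μs i C) (𝒰 : Filter ι) (𝓝 (ℓ C)) :=
    fun C => tendsto_nhds_limUnder (hex _)
  have hmono : ∀ {C D : Set (Hyp X)}, C ⊆ D → ℓ C ≤ ℓ D := by
    intro C D hCD
    exact le_of_tendsto_of_tendsto (hten C) (hten D)
      (Filter.Eventually.of_forall fun i => measure_mono hCD)
  have huniv : ℓ Set.univ = 1 := by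
    refine tendsto_nhds_unique (hten _) ?_
    have heq : (fun i => μs i Set.univ) = fun _ => (1 : ℝ≥0∞) := by
      funext i; exact (hprob i).measure_univ
    rw [heq]; exact tendsto_const_nhds
  have hsubadd : ∀ {C D : Set (Hyp X)}, ℓ (C ∪ D) ≤ ℓ C + ℓ D := by
    intro C D
    refine le_of_tendsto_of_tendsto (hten (C ∪ D)) ((hten C).add (hten D))
      (Filter.Eventually.of_forall fun i => ?_)
    exact measure_union_le C D
  have hadd : ∀ {C D : Set (Hyp X)}, Disjoint C D → MeasurableSet D →
      ℓ (C ∪ D) = ℓ C + ℓ D := by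
    intro C D hCD hD
    refine tendsto_nhds_unique (hten (C ∪ D)) ?_
    have heq : (fun i => μs i (C ∪ D)) = fun i => μs i C + μs i D := by
      funext i; exact measure_union hCD hD
    rw [heq]; exact (hten C).add (hten D)
  have hev : ∀ (C : Set (Hyp X)) (c : ℝ≥0∞), (∀ᶠ i in Filter.atTop, c ≤ μs i C) → c ≤ ℓ C := by
    intro C c hc
    exact ge_of_tendsto (hten C) (hc.filter_mono (Ultrafilter.of_le Filter.atTop))
  -- the set function on (to-be) compacts
  set lam : Set (Hyp X) → ℝ≥0∞ :=
    fun K => ⨅ C : {C : Set (Hyp X) // IsClopen C ∧ K ⊆ C}, ℓ C.1 with hlam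
  have hlam_le : ∀ (K C : Set (Hyp X)), IsClopen C → K ⊆ C → lam K ≤ ℓ C :=
    fun K C h1 h2 => iInf_le _ (⟨C, h1, h2⟩ : {C : Set (Hyp X) // IsClopen C ∧ K ⊆ C})
  have hlam_ge : ∀ (K : Set (Hyp X)) (c : ℝ≥0∞),
      (∀ C, IsClopen C → K ⊆ C → c ≤ ℓ C) → c ≤ lam K :=
    fun K c hc => le_iInf fun C => hc C.1 C.2.1 C.2.2
  have hlam_mono : ∀ {K K' : Set (Hyp X)}, K ⊆ K' → lam K ≤ lam K' :=
    fun {K K'} h => le_iInf fun C => hlam_le K C.1 C.2.1 (h.trans C.2.2)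
  have hlam_clopen : ∀ C : Set (Hyp X), IsClopen C → lam C = ℓ C := by
    intro C hC
    exact le_antisymm (hlam_le C C hC subset_rfl) (hlam_ge C _ fun D h1 h2 => hmono h2)
  have hlam_le_one : ∀ K, lam K ≤ 1 := fun K =>
    le_trans (hlam_le K Set.univ isClopen_univ (Set.subset_univ _)) (le_of_eq huniv)
  have hlam_top : ∀ K, lam K ≠ ⊤ := fun K => ne_top_of_le_ne_top ENNReal.one_ne_top (hlam_le_one K)
  have hlam_subadd : ∀ K₁ K₂ : Set (Hyp X), lam (K₁ ∪ K₂) ≤ lam K₁ + lam K₂ := by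
    intro K₁ K₂
    have hrw : lam K₁ + lam K₂ = ⨅ C₁ : {C : Set (Hyp X) // IsClopen C ∧ K₁ ⊆ C},
        ⨅ C₂ : {C : Set (Hyp X) // IsClopen C ∧ K₂ ⊆ C}, (ℓ C₁.1 + ℓ C₂.1) := by
      rw [hlam, ENNReal.iInf_add]
      exact iInf_congr fun C₁ => ENNReal.add_iInf
    rw [hrw]
    refine le_iInf fun C₁ => le_iInf fun C₂ => ?_
    refine le_trans (hlam_le _ (C₁.1 ∪ C₂.1) (C₁.2.1.union C₂.2.1)
      (Set.union_subset_union C₁.2.2 C₂.2.2)) ?_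
    exact hsubadd
  have hlam_add : ∀ K₁ K₂ : Set (Hyp X), IsCompact K₁ → IsCompact K₂ → Disjoint K₁ K₂ →
      lam (K₁ ∪ K₂) = lam K₁ + lam K₂ := by
    intro K₁ K₂ hc₁ hc₂ hd
    refine le_antisymm (hlam_subadd K₁ K₂) ?_
    obtain ⟨U, hU, hK₁U, hUK₂⟩ := exists_clopen_separating hc₁ hc₂ hd
    refine hlam_ge _ _ fun C hC hKC => ?_
    have h1 : lam K₁ ≤ ℓ (C ∩ U) := hlam_le _ _ (hC.inter hU)
      (Set.subset_inter ((Set.subset_union_left).trans hKC) hK₁U)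
    have h2 : lam K₂ ≤ ℓ (C ∩ Uᶜ) := by
      refine hlam_le _ _ (hC.inter hU.compl) (Set.subset_inter
        ((Set.subset_union_right).trans hKC) ?_)
      exact (Set.subset_compl_iff_disjoint_left).2 hUK₂
    have hCeq : ℓ C = ℓ (C ∩ U) + ℓ (C ∩ Uᶜ) := by
      have hsplit : C = (C ∩ U) ∪ (C ∩ Uᶜ) := by
        rw [Set.inter_union_compl]
      have hdisj : Disjoint (C ∩ U) (C ∩ Uᶜ) :=
        Disjoint.mono Set.inter_subset_right Set.inter_subset_right disjoint_compl_right
      rw [← hadd hdisj ((hC.2.inter hU.compl.2).measurableSet), ← hsplit]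
    rw [hCeq]
    exact add_le_add h1 h2
  -- the content
  set cont : Content (Hyp X) :=
    { toFun := fun K => (lam K.1).toNNReal
      mono' := fun K₁ K₂ h => ENNReal.toNNReal_mono (hlam_top _) (hlam_mono h)
      sup_disjoint' := by
        intro K₁ K₂ hd h1 h2
        have heq := hlam_add K₁.1 K₂.1 K₁.2 K₂.2 hd
        show (lam (K₁.1 ∪ K₂.1)).toNNReal = (lam K₁.1).toNNReal + (lam K₂.1).toNNReal
        rw [heq, ENNReal.toNNReal_add (hlam_top _) (hlam_top _)]
      sup_le' := by
        intro K₁ K₂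
        have hle := hlam_subadd K₁.1 K₂.1
        show (lam (K₁.1 ∪ K₂.1)).toNNReal ≤ (lam K₁.1).toNNReal + (lam K₂.1).toNNReal
        refine le_trans (ENNReal.toNNReal_mono ?_ hle) ?_
        · exact ENNReal.add_ne_top.2 ⟨hlam_top _, hlam_top _⟩
        · rw [ENNReal.toNNReal_add (hlam_top _) (hlam_top _)] } with hcont
  have hcont_eq : ∀ K : TopologicalSpace.Compacts (Hyp X), (cont K : ℝ≥0∞) = lam K.1 := by
    intro K
    show ((lam K.1).toNNReal : ℝ≥0∞) = lam K.1
    exact ENNReal.coe_toNNReal (hlam_top _)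
  have hmeas_clopen : ∀ C : Set (Hyp X), IsClopen C → cont.measure C = ℓ C := by
    intro C hC
    rw [Content.measure_apply _ hC.2.measurableSet, Content.outerMeasure_of_isOpen _ C hC.2]
    have hic : cont.innerContent ⟨C, hC.2⟩ =
        ⨆ (K : TopologicalSpace.Compacts (Hyp X)) (_ : (K : Set (Hyp X)) ⊆ C), (cont K : ℝ≥0∞) :=
      rfl
    rw [hic]
    apply le_antisymm
    · refine iSup₂_le fun K hK => ?_
      rw [hcont_eq]
      exact hlam_le _ _ hC hK
    · have hmem := le_iSup₂ (f := fun (K : TopologicalSpace.Compacts (Hyp X))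
          (_ : (K : Set (Hyp X)) ⊆ C) => (cont K : ℝ≥0∞))
        (⟨C, hC.1.isCompact⟩ : TopologicalSpace.Compacts (Hyp X)) subset_rfl
      rw [hcont_eq] at hmem
      calc ℓ C = lam C := (hlam_clopen C hC).symm
        _ ≤ _ := hmem
  haveI hprob' : IsProbabilityMeasure cont.measure :=
    ⟨by rw [hmeas_clopen _ isClopen_univ, huniv]⟩
  refine ⟨cont.measure, ⟨hprob', inferInstance, inferInstance⟩, fun C hC c hc => ?_⟩
  rw [hmeas_clopen C hC]
  exact hev C c hc

end StageD

/-- (Strong duality in the contradiction graph.) For an arbitrary domain `X`,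
`1/ω*_m := inf_ν sup_μ E[1[h consistent with S]]` and
`1/χ*_m := sup_μ inf_ν E[1[h consistent with S]]` (over regular Borel probability measures `μ`
on `{0,1}^X` and finitely supported distributions `ν` on `V_m(H)`) coincide, i.e.
`ω*_m = χ*_m`; moreover `χ*_m ≤ 2^m`, i.e. `1/χ*_m ≥ 2^{−m}`; and the supremum defining
`1/χ*_m` is attained by some `μ*`. -/
theorem strong_duality (H : Set (X → Bool)) (hH : H.Nonempty) (m : ℕ) :
    (⨅ (ν : Vm H m → ℝ≥0∞) (_ : IsFinsuppDataDist H m ν),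
        ⨆ (μ : Measure (Hyp X)) (_ : IsRegularHypMeasure μ), pay H m μ ν) =
      (⨆ (μ : Measure (Hyp X)) (_ : IsRegularHypMeasure μ),
        ⨅ (ν : Vm H m → ℝ≥0∞) (_ : IsFinsuppDataDist H m ν), pay H m μ ν) ∧
    ((2 : ℝ≥0∞) ^ m)⁻¹ ≤
      (⨆ (μ : Measure (Hyp X)) (_ : IsRegularHypMeasure μ),
        ⨅ (ν : Vm H m → ℝ≥0∞) (_ : IsFinsuppDataDist H m ν), pay H m μ ν) ∧
    ∃ μ : Measure (Hyp X), IsRegularHypMeasure μ ∧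
      (⨅ (ν : Vm H m → ℝ≥0∞) (_ : IsFinsuppDataDist H m ν), pay H m μ ν) =
        (⨆ (μ' : Measure (Hyp X)) (_ : IsRegularHypMeasure μ'),
          ⨅ (ν : Vm H m → ℝ≥0∞) (_ : IsFinsuppDataDist H m ν), pay H m μ' ν) := by
  classical
  by_cases hex : ∃ ν : Vm H m → ℝ≥0∞, IsFinsuppDataDist H m ν
  · -- main case
    obtain ⟨ν₀, hν₀⟩ := hex
    have hne : Nonempty (Vm H m) := by
      by_contra hempty
      rw [not_nonempty_iff] at hempty
      have h0 : ∑' S : Vm H m, ν₀ S = 0 := tsum_empty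
      rw [hν₀.2] at h0
      exact one_ne_zero h0
    set SI := ⨅ (ν : Vm H m → ℝ≥0∞) (_ : IsFinsuppDataDist H m ν),
        ⨆ (μ : Measure (Hyp X)) (_ : IsRegularHypMeasure μ), pay H m μ ν with hSI
    set IS := ⨆ (μ : Measure (Hyp X)) (_ : IsRegularHypMeasure μ),
        ⨅ (ν : Vm H m → ℝ≥0∞) (_ : IsFinsuppDataDist H m ν), pay H m μ ν with hIS
    have htriv : IS ≤ SI := by
      refine iSup₂_le fun μ hμ => le_iInf₂ fun ν hν => ?_
      exact le_trans (iInf₂_le ν hν)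
        (le_iSup₂ (f := fun (μ' : Measure (Hyp X)) (_ : IsRegularHypMeasure μ') =>
          pay H m μ' ν) μ hμ)
    have hSIval : SI = gameVal H m := by
      rw [hSI, gameVal]
      exact iInf_congr fun ν => iInf_congr fun hν => iSup_pay_eq hν
    have hV1 : gameVal H m ≤ 1 := gameVal_le_one hne
    have hchoice : ∀ F : Finset (Vm H m), ∃ μF : Measure (Hyp X), IsProbabilityMeasure μF ∧
        ∀ S ∈ F, gameVal H m ≤ μF (ConsSet H m S) := fun F => exists_finite_optimal hV1 F
    choose μs hμsprob hμsopt using hchoice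
    obtain ⟨μstar, hμstarreg, hμstarbound⟩ := exists_limit_measure μs hμsprob
    have hstar : ∀ S : Vm H m, gameVal H m ≤ μstar (ConsSet H m S) := by
      intro S
      refine hμstarbound _ (isClopen_consSet H m S) _ ?_
      refine Filter.eventually_atTop.2 ⟨{S}, fun F hF => ?_⟩
      exact hμsopt F S (Finset.singleton_subset_iff.1 hF)
    have hpaystar : ∀ ν : Vm H m → ℝ≥0∞, IsFinsuppDataDist H m ν →
        gameVal H m ≤ pay H m μstar ν := by
      intro ν hν
      rw [pay_eq]
      calc gameVal H m = ∑' S : Vm H m, ν S * gameVal H m := by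
            rw [ENNReal.tsum_mul_right, hν.2, one_mul]
        _ ≤ ∑' S : Vm H m, ν S * μstar (ConsSet H m S) :=
            ENNReal.tsum_le_tsum fun S => mul_le_mul_right (hstar S) _
    have hIstar : gameVal H m ≤ ⨅ (ν : Vm H m → ℝ≥0∞) (_ : IsFinsuppDataDist H m ν),
        pay H m μstar ν := le_iInf₂ fun ν hν => hpaystar ν hν
    have hIstarIS : (⨅ (ν : Vm H m → ℝ≥0∞) (_ : IsFinsuppDataDist H m ν),
        pay H m μstar ν) ≤ IS :=
      le_iSup₂ (f := fun (μ : Measure (Hyp X)) (_ : IsRegularHypMeasure μ) =>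
        ⨅ (ν : Vm H m → ℝ≥0∞) (_ : IsFinsuppDataDist H m ν), pay H m μ ν) μstar hμstarreg
    have hmain : SI = IS := by
      refine le_antisymm ?_ htriv
      rw [hSIval]
      exact le_trans hIstar hIstarIS
    refine ⟨hmain, ?_, ⟨μstar, hμstarreg, ?_⟩⟩
    · rw [← hmain, hSIval, gameVal]
      exact le_iInf₂ fun ν hν => two_pow_inv_le_iSup_fpay hν
    · refine le_antisymm hIstarIS ?_
      calc IS ≤ SI := htriv
        _ = gameVal H m := hSIval
        _ ≤ _ := hIstar
  · -- degenerate case: no finitely supported distribution exists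
    have htop : ∀ μ : Measure (Hyp X),
        (⨅ (ν : Vm H m → ℝ≥0∞) (_ : IsFinsuppDataDist H m ν), pay H m μ ν) = ⊤ := by
      intro μ
      rw [iInf_eq_top]
      intro ν
      rw [iInf_eq_top]
      intro hν
      exact absurd ⟨ν, hν⟩ hex
    have hsuptop : (⨆ (μ : Measure (Hyp X)) (_ : IsRegularHypMeasure μ),
        ⨅ (ν : Vm H m → ℝ≥0∞) (_ : IsFinsuppDataDist H m ν), pay H m μ ν) = ⊤ := by
      apply top_unique
      refine le_trans ?_ (le_iSup₂ (f := fun (μ : Measure (Hyp X))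
          (_ : IsRegularHypMeasure μ) =>
          ⨅ (ν : Vm H m → ℝ≥0∞) (_ : IsFinsuppDataDist H m ν), pay H m μ ν)
        (Measure.dirac (fun _ => false : Hyp X)) (isRegularHypMeasure_dirac _))
      rw [htop]
    have hinftop : (⨅ (ν : Vm H m → ℝ≥0∞) (_ : IsFinsuppDataDist H m ν),
        ⨆ (μ : Measure (Hyp X)) (_ : IsRegularHypMeasure μ), pay H m μ ν) = ⊤ := by
      rw [iInf_eq_top]
      intro ν
      rw [iInf_eq_top]
      intro hν
      exact absurd ⟨ν, hν⟩ hex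
    exact ⟨by rw [hsuptop, hinftop], by rw [hsuptop]; exact le_top,
      ⟨Measure.dirac (fun _ => false), isRegularHypMeasure_dirac _,
        by rw [htop, hsuptop]⟩⟩


end ContradictionGraph
end
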